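/- arXiv:math/0112248 — 5 statements merged into one kernel-verified Lean document; each statement's English description precedes it below -/
import Mathlib

section
/- Under the assumption that there exists an algebra homomorphism φ̃ : A >⋊ H → A acting as the identity on A, the map ζ̃(g) = g₍₁₎ φ̃(S g₍₂₎) takes values in the commutant C̃ of A inside A >⋊ H; that is, ζ̃(g) commutes with every element of A. -/
open TensorProduct

/-- `A` is a unital right `H`-module algebra via the bilinear action `act` (written `a ◁ g`):
`a ◁ 1 = a`, `a ◁ (g g') = (a ◁ g) ◁ g'`, `(a a') ◁ g = (a ◁ g₍₁₎)(a' ◁ g₍₂₎)`,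
and `1 ◁ g = ε(g) 1`. -/
structure RightModuleAlgebra (k : Type) [Field k] (H A : Type) [Ring H] [Ring A]
    [HopfAlgebra k H] [Algebra k A] (act : A →ₗ[k] H →ₗ[k] A) : Prop where
  act_one : ∀ a : A, act a 1 = a
  act_mul : ∀ (a : A) (g g' : H), act a (g * g') = act (act a g) g'
  mul_act : ∀ (a a' : A) (g : H), act (a * a') g =
    LinearMap.mul' k A (TensorProduct.map (act a) (act a') (Coalgebra.comul g))
  one_act : ∀ g : H, act (1 : A) g = (Coalgebra.counit (R := k) g) • (1 : A)

/-- The cross-product (smash product) algebra `A >⋊ H`, realized as an ambient algebra `B`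
containing `H` and `A` via `ιH`, `ιA`, with the straightening relation
`a g = g₍₁₎ (a ◁ g₍₂₎)` and with `g ⊗ a ↦ ιH g * ιA a` a linear bijection `H ⊗ A ≃ B`. -/
structure SmashProduct (k : Type) [Field k] (H A B : Type) [Ring H] [Ring A] [Ring B]
    [HopfAlgebra k H] [Algebra k A] [Algebra k B]
    (act : A →ₗ[k] H →ₗ[k] A) : Type where
  ιH : H →ₐ[k] B
  ιA : A →ₐ[k] B
  straighten : ∀ (a : A) (g : H), ιA a * ιH g =
    LinearMap.mul' k B (TensorProduct.map ιH.toLinearMap (ιA.toLinearMap ∘ₗ act a)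
      (Coalgebra.comul g))
  mulMap_bij : Function.Bijective fun x : H ⊗[k] A =>
    LinearMap.mul' k B (TensorProduct.map ιH.toLinearMap ιA.toLinearMap x)

variable {k : Type} [Field k] {H A B : Type} [Ring H] [Ring A] [Ring B]
  [HopfAlgebra k H] [Algebra k A] [Algebra k B] {act : A →ₗ[k] H →ₗ[k] A}

/-- The decoupling map `ζ̃(g) = g₍₁₎ φ̃(S g₍₂₎)`, valued in `A >⋊ H`. -/
noncomputable def zeta (S : SmashProduct k H A B act) (φ : B →ₐ[k] A) : H →ₗ[k] B :=
  (LinearMap.mul' k B) ∘ₗ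
    (TensorProduct.map S.ιH.toLinearMap
      (S.ιA.toLinearMap ∘ₗ φ.toLinearMap ∘ₗ S.ιH.toLinearMap ∘ₗ
        (HopfAlgebra.antipode (R := k) (A := H)))) ∘ₗ Coalgebra.comul



section ConvAux

variable {L : Type} [Ring L] [Algebra k L]

/-- Convolution product on linear maps from a Hopf algebra to an algebra. -/
noncomputable def conv (f g : H →ₗ[k] L) : H →ₗ[k] L :=
  LinearMap.mul' k L ∘ₗ TensorProduct.map f g ∘ₗ Coalgebra.comul

lemma conv_repr (f g : H →ₗ[k] L) {x : H} (r : Coalgebra.Repr k x (H × H)) :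
    conv f g x = ∑ i ∈ r.index, f (r.left i) * g (r.right i) := by
  simp only [conv, LinearMap.comp_apply, ← r.eq, map_sum, TensorProduct.map_tmul,
    LinearMap.mul'_apply]

lemma tri_sum (f g h : H →ₗ[k] L) {x : H}
    (r : Coalgebra.Repr k x (H × H)) (r₁ : ∀ i : H × H, Coalgebra.Repr k (r.left i) (H × H))
    (r₂ : ∀ i : H × H, Coalgebra.Repr k (r.right i) (H × H)) :
    ∑ i ∈ r.index, ∑ j ∈ (r₁ i).index,
      f ((r₁ i).left j) * (g ((r₁ i).right j) * h (r.right i)) =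
    ∑ i ∈ r.index, ∑ j ∈ (r₂ i).index,
      f (r.left i) * (g ((r₂ i).left j) * h ((r₂ i).right j)) := by
  have h0 := Coalgebra.sum_tmul_tmul_eq r r₁ r₂
  have h1 := congrArg (LinearMap.mul' k L ∘ₗ TensorProduct.map f
    (LinearMap.mul' k L ∘ₗ TensorProduct.map g h)) h0
  simpa [map_sum] using h1

lemma sum_counit_smul_right {x : H} (r : Coalgebra.Repr k x (H × H)) :
    ∑ i ∈ r.index, Coalgebra.counit (R := k) (r.left i) • r.right i = x := by
  have h := congrArg (TensorProduct.lid k H) (Coalgebra.sum_counit_tmul_eq r)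
  rw [map_sum] at h
  simp only [TensorProduct.lid_tmul] at h
  rw [h]
  simp

lemma sum_counit_smul_left {x : H} (r : Coalgebra.Repr k x (H × H)) :
    ∑ i ∈ r.index, Coalgebra.counit (R := k) (r.right i) • r.left i = x := by
  have h := congrArg (TensorProduct.rid k H) (Coalgebra.sum_tmul_counit_eq r)
  rw [map_sum] at h
  simp only [TensorProduct.rid_tmul] at h
  rw [h]
  simp

/-- The unit of the convolution algebra. -/
noncomputable def cunit : H →ₗ[k] L :=
  Algebra.linearMap k L ∘ₗ Coalgebra.counit

lemma conv_cunit_left (f : H →ₗ[k] L) : conv cunit f = f := by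
  ext x
  rw [conv_repr cunit f (Coalgebra.Repr.arbitrary k x)]
  calc ∑ i ∈ (Coalgebra.Repr.arbitrary k x).index,
        cunit ((Coalgebra.Repr.arbitrary k x).left i) *
          f ((Coalgebra.Repr.arbitrary k x).right i)
      = f (∑ i ∈ (Coalgebra.Repr.arbitrary k x).index,
          Coalgebra.counit (R := k) ((Coalgebra.Repr.arbitrary k x).left i) •
            (Coalgebra.Repr.arbitrary k x).right i) := by
        simp [cunit, map_sum, ← Algebra.smul_def]
    _ = f x := by rw [sum_counit_smul_right]

lemma conv_cunit_right (f : H →ₗ[k] L) : conv f cunit = f := by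
  ext x
  rw [conv_repr f cunit (Coalgebra.Repr.arbitrary k x)]
  calc ∑ i ∈ (Coalgebra.Repr.arbitrary k x).index,
        f ((Coalgebra.Repr.arbitrary k x).left i) *
          cunit ((Coalgebra.Repr.arbitrary k x).right i)
      = f (∑ i ∈ (Coalgebra.Repr.arbitrary k x).index,
          Coalgebra.counit (R := k) ((Coalgebra.Repr.arbitrary k x).right i) •
            (Coalgebra.Repr.arbitrary k x).left i) := by
        simp only [map_sum, map_smul]
        refine Finset.sum_congr rfl fun i _ => ?_
        simp [cunit, Algebra.smul_def, Algebra.commutes]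
    _ = f x := by rw [sum_counit_smul_left]

lemma conv_assoc (f g h : H →ₗ[k] L) : conv (conv f g) h = conv f (conv g h) := by
  ext x
  rw [conv_repr (conv f g) h (Coalgebra.Repr.arbitrary k x),
    conv_repr f (conv g h) (Coalgebra.Repr.arbitrary k x)]
  set r := Coalgebra.Repr.arbitrary k x
  have L1 : ∀ i ∈ r.index, conv f g (r.left i) * h (r.right i)
      = ∑ j ∈ (Coalgebra.Repr.arbitrary k (r.left i)).index,
          f ((Coalgebra.Repr.arbitrary k (r.left i)).left j) *
            (g ((Coalgebra.Repr.arbitrary k (r.left i)).right j) * h (r.right i)) := by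
    intro i _
    rw [conv_repr f g (Coalgebra.Repr.arbitrary k (r.left i)), Finset.sum_mul]
    simp [mul_assoc]
  have L2 : ∀ i ∈ r.index, f (r.left i) * conv g h (r.right i)
      = ∑ j ∈ (Coalgebra.Repr.arbitrary k (r.right i)).index,
          f (r.left i) *
            (g ((Coalgebra.Repr.arbitrary k (r.right i)).left j) *
              h ((Coalgebra.Repr.arbitrary k (r.right i)).right j)) := by
    intro i _
    rw [conv_repr g h (Coalgebra.Repr.arbitrary k (r.right i)), Finset.mul_sum]
  rw [Finset.sum_congr rfl L1, Finset.sum_congr rfl L2]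
  exact tri_sum f g h r (fun i => Coalgebra.Repr.arbitrary k (r.left i))
    (fun i => Coalgebra.Repr.arbitrary k (r.right i))

lemma conv_antipode_left (u : H →ₐ[k] L) :
    conv (u.toLinearMap ∘ₗ HopfAlgebra.antipode (R := k) (A := H)) u.toLinearMap
      = cunit := by
  ext x
  rw [conv_repr _ _ (Coalgebra.Repr.arbitrary k x)]
  simp only [LinearMap.comp_apply, AlgHom.toLinearMap_apply, ← map_mul, ← map_sum,
    HopfAlgebra.sum_antipode_mul_eq_algebraMap_counit (Coalgebra.Repr.arbitrary k x)]
  simp [cunit, AlgHom.commutes]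

lemma conv_antipode_right (u : H →ₐ[k] L) :
    conv u.toLinearMap (u.toLinearMap ∘ₗ HopfAlgebra.antipode (R := k) (A := H))
      = cunit := by
  ext x
  rw [conv_repr _ _ (Coalgebra.Repr.arbitrary k x)]
  simp only [LinearMap.comp_apply, AlgHom.toLinearMap_apply, ← map_mul, ← map_sum,
    HopfAlgebra.sum_mul_antipode_eq_algebraMap_counit (Coalgebra.Repr.arbitrary k x)]
  simp [cunit, AlgHom.commutes]

lemma conv_mulLeft (a : L) (f g : H →ₗ[k] L) :
    conv (LinearMap.mulLeft k a ∘ₗ f) g = LinearMap.mulLeft k a ∘ₗ conv f g := by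
  ext x
  rw [LinearMap.comp_apply, conv_repr _ g (Coalgebra.Repr.arbitrary k x),
    conv_repr f g (Coalgebra.Repr.arbitrary k x)]
  simp [Finset.mul_sum, mul_assoc]

lemma conv_mulRight (a : L) (f g : H →ₗ[k] L) :
    conv f (LinearMap.mulRight k a ∘ₗ g) = LinearMap.mulRight k a ∘ₗ conv f g := by
  ext x
  rw [LinearMap.comp_apply, conv_repr f _ (Coalgebra.Repr.arbitrary k x),
    conv_repr f g (Coalgebra.Repr.arbitrary k x)]
  simp [Finset.sum_mul, mul_assoc]

lemma mulLeft_cunit (a : L) :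
    LinearMap.mulLeft k a ∘ₗ (cunit : H →ₗ[k] L)
      = LinearMap.mulRight k a ∘ₗ (cunit : H →ₗ[k] L) := by
  ext x
  simp [cunit, Algebra.commutes]

end ConvAux

/-- The map `ψ∘S : g ↦ φ(ι_H(antipode g))`, valued in `A`. -/
noncomputable def psiS (S : SmashProduct k H A B act) (φ : B →ₐ[k] A) : H →ₗ[k] A :=
  (φ.comp S.ιH).toLinearMap ∘ₗ HopfAlgebra.antipode (R := k) (A := H)

/-- Straightening transported to `A` via `φ`. -/
lemma straightA (S : SmashProduct k H A B act) (φ : B →ₐ[k] A)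
    (hφ : ∀ a : A, φ (S.ιA a) = a) (a : A) :
    conv (φ.comp S.ιH).toLinearMap (act a)
      = LinearMap.mulLeft k a ∘ₗ (φ.comp S.ιH).toLinearMap := by
  ext x
  have h1 := congrArg φ (S.straighten a x)
  rw [map_mul, hφ] at h1
  rw [← (Coalgebra.Repr.arbitrary k x).eq] at h1
  simp only [map_sum, TensorProduct.map_tmul, LinearMap.mul'_apply, map_mul,
    LinearMap.comp_apply, AlgHom.toLinearMap_apply, hφ] at h1
  rw [LinearMap.comp_apply, LinearMap.mulLeft_apply, AlgHom.toLinearMap_apply,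
    AlgHom.comp_apply, conv_repr (φ.comp S.ιH).toLinearMap (act a)
      (Coalgebra.Repr.arbitrary k x)]
  simp only [AlgHom.toLinearMap_apply, AlgHom.comp_apply]
  exact h1.symm

/-- The key identity: `(a ◁ ·) ⋆ ψS = ψS(·)·a`. -/
lemma key_conv (S : SmashProduct k H A B act) (φ : B →ₐ[k] A)
    (hφ : ∀ a : A, φ (S.ιA a) = a) (a : A) :
    conv (act a) (psiS S φ) = LinearMap.mulRight k a ∘ₗ psiS S φ := by
  have hact : act a = conv (psiS S φ)
      (LinearMap.mulLeft k a ∘ₗ (φ.comp S.ιH).toLinearMap) := by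
    rw [← straightA S φ hφ a, ← conv_assoc, psiS, conv_antipode_left (φ.comp S.ιH),
      conv_cunit_left]
  rw [hact, conv_assoc, conv_mulLeft, psiS, conv_antipode_right (φ.comp S.ιH),
    mulLeft_cunit, conv_mulRight, conv_cunit_right]

/-- `ζ̃(g)` commutes with every element of `A`, i.e. `ζ̃` takes values in
the commutant of `A` inside `A >⋊ H`. -/
theorem zeta_mem_commutant
    (hMA : RightModuleAlgebra k H A act)
    (S : SmashProduct k H A B act) (φ : B →ₐ[k] A)
    (hφ : ∀ a : A, φ (S.ιA a) = a) :
    ∀ (g : H) (a : A), zeta S φ g * S.ιA a = S.ιA a * zeta S φ g := by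
  intro g a
  classical
  set r := Coalgebra.Repr.arbitrary k g with hr
  have hz : zeta S φ g = ∑ i ∈ r.index, S.ιH (r.left i) * S.ιA (psiS S φ (r.right i)) := by
    simp only [zeta, LinearMap.comp_apply, ← r.eq, map_sum, TensorProduct.map_tmul,
      LinearMap.mul'_apply, AlgHom.toLinearMap_apply, psiS, AlgHom.comp_apply]
  have hL : zeta S φ g * S.ιA a = ∑ i ∈ r.index,
      S.ιH (r.left i) * S.ιA (conv (act a) (psiS S φ) (r.right i)) := by
    rw [hz, Finset.sum_mul]
    refine Finset.sum_congr rfl fun i _ => ?_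
    rw [key_conv S φ hφ a, LinearMap.comp_apply, LinearMap.mulRight_apply, map_mul,
      mul_assoc]
  have hR : S.ιA a * zeta S φ g = ∑ i ∈ r.index,
      S.ιH (r.left i) * S.ιA (conv (act a) (psiS S φ) (r.right i)) := by
    rw [hz, Finset.mul_sum]
    have hterm : ∀ i ∈ r.index,
        S.ιA a * (S.ιH (r.left i) * S.ιA (psiS S φ (r.right i)))
        = ∑ j ∈ (Coalgebra.Repr.arbitrary k (r.left i)).index,
            S.ιH ((Coalgebra.Repr.arbitrary k (r.left i)).left j) *
              (S.ιA (act a ((Coalgebra.Repr.arbitrary k (r.left i)).right j)) *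
                S.ιA (psiS S φ (r.right i))) := by
      intro i _
      rw [← mul_assoc]
      have hs := S.straighten a (r.left i)
      rw [← (Coalgebra.Repr.arbitrary k (r.left i)).eq] at hs
      simp only [map_sum, TensorProduct.map_tmul, LinearMap.mul'_apply,
        LinearMap.comp_apply, AlgHom.toLinearMap_apply] at hs
      rw [hs, Finset.sum_mul]
      exact Finset.sum_congr rfl fun j _ => by rw [mul_assoc]
    rw [Finset.sum_congr rfl hterm]
    have htri := tri_sum (S.ιH.toLinearMap) (S.ιA.toLinearMap ∘ₗ act a)
      (S.ιA.toLinearMap ∘ₗ psiS S φ) r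
      (fun i => Coalgebra.Repr.arbitrary k (r.left i))
      (fun i => Coalgebra.Repr.arbitrary k (r.right i))
    simp only [LinearMap.comp_apply, AlgHom.toLinearMap_apply] at htri
    rw [htri]
    refine Finset.sum_congr rfl fun i _ => ?_
    rw [conv_repr (act a) (psiS S φ) (Coalgebra.Repr.arbitrary k (r.right i)),
      map_sum, Finset.mul_sum]
    exact Finset.sum_congr rfl fun j _ => by rw [map_mul]
  rw [hL, hR]
end

section
/- Let H⁺, H⁻ be Hopf subalgebras of H with H = H⁺H⁻ = H⁻H⁺ (Gauss decomposition), and suppose there exist algebra homomorphisms φ̃± : A >⋊ H± → A restricting to the identity on A. Define ζ̃±(g) = g₍₁₎ φ̃±(S g₍₂₎) for g ∈ H±. Then each ζ̃± is an injective algebra homomorphism from H± into the commutant C̃ of A in A >⋊ H. -/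
open TensorProduct

variable {k : Type} [Field k] {H A B : Type} [Ring H] [Ring A] [Ring B]
  [HopfAlgebra k H] [Algebra k A] [Algebra k B] {act : A →ₗ[k] H →ₗ[k] A}

/-- The Gauss-decomposed setting: `H⁺`, `H⁻` are Hopf subalgebras of `H` (realized by
injective algebra embeddings `ιp`, `ιm` compatible with coproduct and antipode), with
`H = H⁺H⁻ = H⁻H⁺`, together with the cross-products `A >⋊ H`, `A >⋊ H⁺`, `A >⋊ H⁻` and
the embeddings `jp : A >⋊ H⁺ → A >⋊ H`, `jm : A >⋊ H⁻ → A >⋊ H`. -/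
structure GaussSetting (k : Type) [Field k] (H A B Hp Hm Bp Bm : Type)
    [Ring H] [Ring A] [Ring B] [Ring Hp] [Ring Hm] [Ring Bp] [Ring Bm]
    [HopfAlgebra k H] [HopfAlgebra k Hp] [HopfAlgebra k Hm]
    [Algebra k A] [Algebra k B] [Algebra k Bp] [Algebra k Bm]
    (act : A →ₗ[k] H →ₗ[k] A) (actp : A →ₗ[k] Hp →ₗ[k] A)
    (actm : A →ₗ[k] Hm →ₗ[k] A) : Type where
  S : SmashProduct k H A B act
  Sp : SmashProduct k Hp A Bp actp
  Sm : SmashProduct k Hm A Bm actm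
  ιp : Hp →ₐ[k] H
  ιm : Hm →ₐ[k] H
  ιp_inj : Function.Injective ιp
  ιm_inj : Function.Injective ιm
  ιp_comul : ∀ g : Hp, Coalgebra.comul (R := k) (ιp g) =
    TensorProduct.map ιp.toLinearMap ιp.toLinearMap (Coalgebra.comul g)
  ιm_comul : ∀ g : Hm, Coalgebra.comul (R := k) (ιm g) =
    TensorProduct.map ιm.toLinearMap ιm.toLinearMap (Coalgebra.comul g)
  ιp_antipode : ∀ g : Hp, HopfAlgebra.antipode (R := k) (ιp g) =
    ιp (HopfAlgebra.antipode (R := k) g)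
  ιm_antipode : ∀ g : Hm, HopfAlgebra.antipode (R := k) (ιm g) =
    ιm (HopfAlgebra.antipode (R := k) g)
  actp_eq : ∀ (a : A) (g : Hp), actp a g = act a (ιp g)
  actm_eq : ∀ (a : A) (g : Hm), actm a g = act a (ιm g)
  jp : Bp →ₐ[k] B
  jm : Bm →ₐ[k] B
  jp_H : ∀ g : Hp, jp (Sp.ιH g) = S.ιH (ιp g)
  jp_A : ∀ a : A, jp (Sp.ιA a) = S.ιA a
  jm_H : ∀ g : Hm, jm (Sm.ιH g) = S.ιH (ιm g)
  jm_A : ∀ a : A, jm (Sm.ιA a) = S.ιA a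
  gauss_pm : Submodule.span k {x : H | ∃ (u : Hp) (v : Hm), x = ιp u * ιm v} = ⊤
  gauss_mp : Submodule.span k {x : H | ∃ (u : Hm) (v : Hp), x = ιm u * ιp v} = ⊤

variable {Hp Hm Bp Bm : Type} [Ring Hp] [Ring Hm] [Ring Bp] [Ring Bm]
  [HopfAlgebra k Hp] [HopfAlgebra k Hm] [Algebra k Bp] [Algebra k Bm]
  {actp : A →ₗ[k] Hp →ₗ[k] A} {actm : A →ₗ[k] Hm →ₗ[k] A}

/-- The decoupling map `ζ̃⁺(g) = g₍₁₎ φ̃⁺(S g₍₂₎)`, viewed inside `A >⋊ H`. -/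
noncomputable def zetaP (G : GaussSetting k H A B Hp Hm Bp Bm act actp actm)
    (φp : Bp →ₐ[k] A) : Hp →ₗ[k] B :=
  G.jp.toLinearMap ∘ₗ zeta G.Sp φp

/-- The decoupling map `ζ̃⁻(g) = g₍₁₎ φ̃⁻(S g₍₂₎)`, viewed inside `A >⋊ H`. -/
noncomputable def zetaM (G : GaussSetting k H A B Hp Hm Bp Bm act actp actm)
    (φm : Bm →ₐ[k] A) : Hm →ₗ[k] B :=
  G.jm.toLinearMap ∘ₗ zeta G.Sm φm


/-! ### Auxiliary convolution-algebra development -/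

section ConvAux

open Coalgebra HopfAlgebra

variable {X Y : Type} [AddCommMonoid X] [Module k X] [Coalgebra k X]
  [Semiring Y] [Algebra k Y]

/-- Convolution product on linear maps from a coalgebra to an algebra. -/
noncomputable def myconv (f g : X →ₗ[k] Y) : X →ₗ[k] Y :=
  LinearMap.mul' k Y ∘ₗ TensorProduct.map f g ∘ₗ Coalgebra.comul

/-- Convolution unit. -/
noncomputable def convUnit : X →ₗ[k] Y := Algebra.linearMap k Y ∘ₗ Coalgebra.counit

lemma convUnit_apply (x : X) : (convUnit : X →ₗ[k] Y) x = algebraMap k Y (counit x) := rfl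

lemma myconv_repr (f g : X →ₗ[k] Y) {x : X} {ι : Type*} (r : Coalgebra.Repr k x ι) :
    myconv f g x = ∑ i ∈ r.index, f (r.left i) * g (r.right i) := by
  simp only [myconv, LinearMap.comp_apply, ← r.eq, map_sum, TensorProduct.map_tmul,
    LinearMap.mul'_apply]

lemma sum_counit_smul {x : X} {ι : Type*} (r : Coalgebra.Repr k x ι) :
    ∑ i ∈ r.index, Coalgebra.counit (R := k) (r.left i) • r.right i = x := by
  have h := congrArg (TensorProduct.lid k X) (Coalgebra.sum_counit_tmul_eq r)
  simpa only [map_sum, TensorProduct.lid_tmul, one_smul] using h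

lemma sum_smul_counit {x : X} {ι : Type*} (r : Coalgebra.Repr k x ι) :
    ∑ i ∈ r.index, Coalgebra.counit (R := k) (r.right i) • r.left i = x := by
  have h := congrArg (TensorProduct.rid k X) (Coalgebra.sum_tmul_counit_eq r)
  simpa only [map_sum, TensorProduct.rid_tmul, one_smul] using h

lemma myconv_unit_right (f : X →ₗ[k] Y) : myconv f convUnit = f := by
  apply LinearMap.ext; intro x
  have r := Coalgebra.Repr.arbitrary k x
  rw [myconv_repr f convUnit r]
  have h := congrArg f (sum_smul_counit r)
  rw [map_sum] at h
  calc ∑ i ∈ r.index, f (r.left i) * convUnit (r.right i)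
      = ∑ i ∈ r.index, Coalgebra.counit (R := k) (r.right i) • f (r.left i) := by
        refine Finset.sum_congr rfl fun i _ => ?_
        rw [convUnit_apply, Algebra.smul_def]
        exact (Algebra.commutes _ _).symm
    _ = f x := by simpa [map_smul] using h

lemma myconv_unit_left (f : X →ₗ[k] Y) : myconv convUnit f = f := by
  apply LinearMap.ext; intro x
  have r := Coalgebra.Repr.arbitrary k x
  rw [myconv_repr convUnit f r]
  have h := congrArg f (_root_.sum_counit_smul r)
  rw [map_sum] at h
  calc ∑ i ∈ r.index, convUnit (r.left i) * f (r.right i)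
      = ∑ i ∈ r.index, Coalgebra.counit (R := k) (r.left i) • f (r.right i) := by
        refine Finset.sum_congr rfl fun i _ => ?_
        rw [convUnit_apply, Algebra.smul_def]
    _ = f x := by simpa [map_smul] using h

lemma myconv_assoc (f g h : X →ₗ[k] Y) :
    myconv (myconv f g) h = myconv f (myconv g h) := by
  apply LinearMap.ext; intro x
  have r := Coalgebra.Repr.arbitrary k x
  have a₁ : ∀ i : X × X, Coalgebra.Repr k (r.left i) (X × X) := fun i => Coalgebra.Repr.arbitrary k _
  have a₂ : ∀ i : X × X, Coalgebra.Repr k (r.right i) (X × X) := fun i => Coalgebra.Repr.arbitrary k _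
  have key := congrArg
    (⇑(LinearMap.mul' k Y ∘ₗ TensorProduct.map f (LinearMap.mul' k Y ∘ₗ TensorProduct.map g h)))
    (Coalgebra.sum_tmul_tmul_eq r a₁ a₂)
  simp only [map_sum, LinearMap.comp_apply, TensorProduct.map_tmul, LinearMap.mul'_apply] at key
  have hl : myconv (myconv f g) h x
      = ∑ i ∈ r.index, ∑ j ∈ (a₁ i).index,
          f ((a₁ i).left j) * (g ((a₁ i).right j) * h (r.right i)) := by
    rw [myconv_repr (myconv f g) h r]
    refine Finset.sum_congr rfl fun i _ => ?_
    rw [myconv_repr f g (a₁ i), Finset.sum_mul]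
    exact Finset.sum_congr rfl fun j _ => mul_assoc _ _ _
  have hr : myconv f (myconv g h) x
      = ∑ i ∈ r.index, ∑ j ∈ (a₂ i).index,
          f (r.left i) * (g ((a₂ i).left j) * h ((a₂ i).right j)) := by
    rw [myconv_repr f (myconv g h) r]
    refine Finset.sum_congr rfl fun i _ => ?_
    rw [myconv_repr g h (a₂ i), Finset.mul_sum]
  rw [hl, hr, key]

lemma myconv_mulLeft (x : Y) (f g : X →ₗ[k] Y) :
    myconv (LinearMap.mulLeft k x ∘ₗ f) g = LinearMap.mulLeft k x ∘ₗ myconv f g := by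
  apply LinearMap.ext; intro c
  have r := Coalgebra.Repr.arbitrary k c
  rw [myconv_repr _ _ r, LinearMap.comp_apply, myconv_repr f g r, LinearMap.mulLeft_apply,
    Finset.mul_sum]
  exact Finset.sum_congr rfl fun i _ => by
    rw [LinearMap.comp_apply, LinearMap.mulLeft_apply, mul_assoc]

lemma myconv_mulRight (x : Y) (f g : X →ₗ[k] Y) :
    myconv f (LinearMap.mulRight k x ∘ₗ g) = LinearMap.mulRight k x ∘ₗ myconv f g := by
  apply LinearMap.ext; intro c
  have r := Coalgebra.Repr.arbitrary k c
  rw [myconv_repr _ _ r, LinearMap.comp_apply, myconv_repr f g r, LinearMap.mulRight_apply,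
    Finset.sum_mul]
  exact Finset.sum_congr rfl fun i _ => by
    rw [LinearMap.comp_apply, LinearMap.mulRight_apply, mul_assoc]

lemma myconv_span (x : Y) (f : X →ₗ[k] Y) :
    myconv f (LinearMap.toSpanSingleton k Y x ∘ₗ Coalgebra.counit) =
      LinearMap.mulRight k x ∘ₗ f := by
  apply LinearMap.ext; intro c
  have r := Coalgebra.Repr.arbitrary k c
  rw [myconv_repr _ _ r, LinearMap.comp_apply, LinearMap.mulRight_apply]
  have h := congrArg f (sum_smul_counit r)
  rw [map_sum] at h
  calc ∑ i ∈ r.index, f (r.left i) *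
        (LinearMap.toSpanSingleton k Y x ∘ₗ Coalgebra.counit) (r.right i)
      = ∑ i ∈ r.index, (Coalgebra.counit (R := k) (r.right i) • f (r.left i)) * x := by
        refine Finset.sum_congr rfl fun i _ => ?_
        rw [LinearMap.comp_apply, LinearMap.toSpanSingleton_apply, mul_smul_comm,
          smul_mul_assoc]
    _ = f c * x := by
        rw [← Finset.sum_mul]
        congr 1
        simpa [map_smul] using h

lemma mulLeft_comp_convUnit (x : Y) :
    LinearMap.mulLeft k x ∘ₗ (convUnit : X →ₗ[k] Y) =
      LinearMap.toSpanSingleton k Y x ∘ₗ Coalgebra.counit := by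
  apply LinearMap.ext; intro c
  rw [LinearMap.comp_apply, convUnit_apply, LinearMap.mulLeft_apply, LinearMap.comp_apply,
    LinearMap.toSpanSingleton_apply, Algebra.smul_def]
  exact (Algebra.commutes _ _).symm

end ConvAux

section SmashAux

open Coalgebra HopfAlgebra

variable (S : SmashProduct k H A B act) (φ : B →ₐ[k] A)

/-- `ν(g) = φ(S g)` viewed in `B`. -/
noncomputable def smashNu : H →ₗ[k] B :=
  S.ιA.toLinearMap ∘ₗ φ.toLinearMap ∘ₗ S.ιH.toLinearMap ∘ₗ HopfAlgebra.antipode (R := k)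

/-- `β = ιA ∘ φ ∘ ιH` as an algebra map. -/
noncomputable def smashBeta : H →ₐ[k] B := (S.ιA.comp φ).comp S.ιH

lemma smashNu_apply (g : H) :
    smashNu S φ g = smashBeta S φ (HopfAlgebra.antipode (R := k) g) := rfl

lemma zeta_eq_conv : zeta S φ = myconv S.ιH.toLinearMap (smashNu S φ) := rfl

lemma sum_beta_nu {g : H} {ι : Type*} (r : Coalgebra.Repr k g ι) :
    ∑ i ∈ r.index, smashBeta S φ (r.left i) * smashNu S φ (r.right i)
      = algebraMap k B (Coalgebra.counit g) := by
  have : ∀ i ∈ r.index, smashBeta S φ (r.left i) * smashNu S φ (r.right i)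
      = smashBeta S φ (r.left i * HopfAlgebra.antipode (R := k) (r.right i)) := fun i _ => by
    rw [smashNu_apply, map_mul]
  rw [Finset.sum_congr rfl this, ← map_sum, HopfAlgebra.sum_mul_antipode_eq_algebraMap_counit r,
    AlgHom.commutes]

lemma sum_nu_beta {g : H} {ι : Type*} (r : Coalgebra.Repr k g ι) :
    ∑ i ∈ r.index, smashNu S φ (r.left i) * smashBeta S φ (r.right i)
      = algebraMap k B (Coalgebra.counit g) := by
  have : ∀ i ∈ r.index, smashNu S φ (r.left i) * smashBeta S φ (r.right i)
      = smashBeta S φ (HopfAlgebra.antipode (R := k) (r.left i) * r.right i) := fun i _ => by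
    rw [smashNu_apply, map_mul]
  rw [Finset.sum_congr rfl this, ← map_sum, HopfAlgebra.sum_antipode_mul_eq_algebraMap_counit r,
    AlgHom.commutes]

lemma conv_beta_nu :
    myconv (smashBeta S φ).toLinearMap (smashNu S φ) = convUnit := by
  apply LinearMap.ext; intro g
  have r := Coalgebra.Repr.arbitrary k g
  rw [myconv_repr _ _ r, convUnit_apply]
  exact sum_beta_nu S φ r

lemma conv_nu_beta :
    myconv (smashNu S φ) (smashBeta S φ).toLinearMap = convUnit := by
  apply LinearMap.ext; intro g
  have r := Coalgebra.Repr.arbitrary k g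
  rw [myconv_repr _ _ r, convUnit_apply]
  exact sum_nu_beta S φ r

lemma straighten_eq (a : A) :
    LinearMap.mulLeft k (S.ιA a) ∘ₗ S.ιH.toLinearMap
      = myconv S.ιH.toLinearMap (S.ιA.toLinearMap ∘ₗ act a) := by
  apply LinearMap.ext; intro g
  simpa [myconv] using S.straighten a g

variable (hφ : ∀ a : A, φ (S.ιA a) = a)
include hφ

lemma conv_beta_alpha (a : A) :
    myconv (smashBeta S φ).toLinearMap (S.ιA.toLinearMap ∘ₗ act a)
      = LinearMap.mulLeft k (S.ιA a) ∘ₗ (smashBeta S φ).toLinearMap := by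
  apply LinearMap.ext; intro g
  have r := Coalgebra.Repr.arbitrary k g
  rw [myconv_repr _ _ r]
  have step1 : ∀ i ∈ r.index,
      (smashBeta S φ).toLinearMap (r.left i) * (S.ιA.toLinearMap ∘ₗ act a) (r.right i)
      = S.ιA (φ (S.ιH (r.left i) * S.ιA (act a (r.right i)))) := fun i _ => by
    simp only [LinearMap.comp_apply, AlgHom.toLinearMap_apply, smashBeta, AlgHom.comp_apply]
    rw [map_mul, map_mul, hφ]
  rw [Finset.sum_congr rfl step1, ← map_sum, ← map_sum]
  have key : ∑ i ∈ r.index, S.ιH (r.left i) * S.ιA (act a (r.right i)) = S.ιA a * S.ιH g := by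
    have h := congrFun (congrArg DFunLike.coe (straighten_eq S a)) g
    simp only [LinearMap.comp_apply, LinearMap.mulLeft_apply, AlgHom.toLinearMap_apply] at h
    rw [h, myconv_repr _ _ r]
    simp only [LinearMap.comp_apply, AlgHom.toLinearMap_apply]
  rw [key, map_mul, hφ, LinearMap.comp_apply, LinearMap.mulLeft_apply, AlgHom.toLinearMap_apply,
    smashBeta, AlgHom.comp_apply, AlgHom.comp_apply, map_mul]

lemma conv_alpha_nu (a : A) :
    myconv (S.ιA.toLinearMap ∘ₗ act a) (smashNu S φ)
      = LinearMap.mulRight k (S.ιA a) ∘ₗ smashNu S φ := by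
  calc myconv (S.ιA.toLinearMap ∘ₗ act a) (smashNu S φ)
      = myconv convUnit (myconv (S.ιA.toLinearMap ∘ₗ act a) (smashNu S φ)) :=
        (myconv_unit_left _).symm
    _ = myconv (myconv (smashNu S φ) (smashBeta S φ).toLinearMap)
          (myconv (S.ιA.toLinearMap ∘ₗ act a) (smashNu S φ)) := by rw [conv_nu_beta]
    _ = myconv (smashNu S φ) (myconv (myconv (smashBeta S φ).toLinearMap
          (S.ιA.toLinearMap ∘ₗ act a)) (smashNu S φ)) := by
        rw [myconv_assoc, myconv_assoc]
    _ = myconv (smashNu S φ) (myconv (LinearMap.mulLeft k (S.ιA a) ∘ₗ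
          (smashBeta S φ).toLinearMap) (smashNu S φ)) := by rw [conv_beta_alpha S φ hφ]
    _ = myconv (smashNu S φ) (LinearMap.mulLeft k (S.ιA a) ∘ₗ
          myconv (smashBeta S φ).toLinearMap (smashNu S φ)) := by rw [myconv_mulLeft]
    _ = myconv (smashNu S φ) (LinearMap.mulLeft k (S.ιA a) ∘ₗ convUnit) := by rw [conv_beta_nu]
    _ = myconv (smashNu S φ) (LinearMap.toSpanSingleton k B (S.ιA a) ∘ₗ Coalgebra.counit) := by
        rw [mulLeft_comp_convUnit]
    _ = LinearMap.mulRight k (S.ιA a) ∘ₗ smashNu S φ := myconv_span _ _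

lemma zeta_commute (a : A) (g : H) :
    S.ιA a * zeta S φ g = zeta S φ g * S.ιA a := by
  have key : LinearMap.mulLeft k (S.ιA a) ∘ₗ zeta S φ
      = LinearMap.mulRight k (S.ιA a) ∘ₗ zeta S φ := by
    rw [zeta_eq_conv, ← myconv_mulLeft]
    calc myconv (LinearMap.mulLeft k (S.ιA a) ∘ₗ S.ιH.toLinearMap) (smashNu S φ)
        = myconv (myconv S.ιH.toLinearMap (S.ιA.toLinearMap ∘ₗ act a)) (smashNu S φ) := by
          rw [straighten_eq]
      _ = myconv S.ιH.toLinearMap (myconv (S.ιA.toLinearMap ∘ₗ act a) (smashNu S φ)) :=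
          myconv_assoc _ _ _
      _ = myconv S.ιH.toLinearMap (LinearMap.mulRight k (S.ιA a) ∘ₗ smashNu S φ) := by
          rw [conv_alpha_nu S φ hφ]
      _ = LinearMap.mulRight k (S.ιA a) ∘ₗ myconv S.ιH.toLinearMap (smashNu S φ) :=
          myconv_mulRight _ _ _
  have h := congrFun (congrArg DFunLike.coe key) g
  simpa using h

end SmashAux



section SmashAux2

open Coalgebra HopfAlgebra

/-- The canonical representation of `comul 1`. -/
noncomputable def oneRepr : Coalgebra.Repr k (1 : H) Unit where
  index := (Finset.univ : Finset Unit)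
  left := fun _ => 1
  right := fun _ => 1
  eq := by simp [Bialgebra.comul_one, Algebra.TensorProduct.one_def]

lemma antipode_one' : HopfAlgebra.antipode (R := k) (1 : H) = 1 := by
  have h := HopfAlgebra.sum_mul_antipode_eq_algebraMap_counit (R := k) (oneRepr (k := k) (H := H))
  simpa [oneRepr] using h

lemma smashBeta_apply (S : SmashProduct k H A B act) (φ : B →ₐ[k] A) (x : H) :
    smashBeta S φ x = S.ιA (φ (S.ιH x)) := rfl

lemma zeta_one' (S : SmashProduct k H A B act) (φ : B →ₐ[k] A) : zeta S φ (1 : H) = 1 := by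
  rw [zeta_eq_conv, myconv_repr _ _ (oneRepr (k := k) (H := H))]
  simp [oneRepr, smashNu_apply, antipode_one', smashBeta_apply]

/-- Representation of `comul (g ⊗ₜ g')` built from representations of `comul g`, `comul g'`. -/
noncomputable def Coalgebra.Repr.tprod {g g' : H} {ι ι' : Type*} (r : Coalgebra.Repr k g ι)
    (r' : Coalgebra.Repr k g' ι') : Coalgebra.Repr k (g ⊗ₜ[k] g' : H ⊗[k] H) (ι × ι') where
  index := r.index ×ˢ r'.index
  left := fun p => r.left p.1 ⊗ₜ[k] r'.left p.2
  right := fun p => r.right p.1 ⊗ₜ[k] r'.right p.2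
  eq := by
    have hc : CoalgebraStruct.comul (R := k) (g ⊗ₜ[k] g' : H ⊗[k] H)
        = TensorProduct.tensorTensorTensorComm k H H H H
            (CoalgebraStruct.comul g ⊗ₜ[k] CoalgebraStruct.comul g') := rfl
    rw [hc, ← r.eq, ← r'.eq]
    simp only [TensorProduct.sum_tmul, TensorProduct.tmul_sum, map_sum,
      TensorProduct.tensorTensorTensorComm_tmul]
    rw [Finset.sum_product, Finset.sum_comm]

@[simp] lemma tprod_index {g g' : H} {ι ι' : Type*} (r : Coalgebra.Repr k g ι) (r' : Coalgebra.Repr k g' ι') :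
    (r.tprod r').index = r.index ×ˢ r'.index := rfl

@[simp] lemma tprod_left {g g' : H} {ι ι' : Type*} (r : Coalgebra.Repr k g ι) (r' : Coalgebra.Repr k g' ι')
    (p : ι × ι') : (r.tprod r').left p = r.left p.1 ⊗ₜ[k] r'.left p.2 := rfl

@[simp] lemma tprod_right {g g' : H} {ι ι' : Type*} (r : Coalgebra.Repr k g ι) (r' : Coalgebra.Repr k g' ι')
    (p : ι × ι') : (r.tprod r').right p = r.right p.1 ⊗ₜ[k] r'.right p.2 := rfl

lemma counit_tmul (g g' : H) :
    Coalgebra.counit (R := k) (g ⊗ₜ[k] g' : H ⊗[k] H)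
      = Coalgebra.counit (R := k) g * Coalgebra.counit (R := k) g' := by
  rw [TensorProduct.counit_tmul, smul_eq_mul, mul_comm]

/-- Pointwise formula for convolution on a tensor square. -/
lemma tprod_sum {Y : Type} [Semiring Y] [Algebra k Y] (f g : H ⊗[k] H →ₗ[k] Y) {x y : H}
    {ι ι' : Type*} (r : Coalgebra.Repr k x ι) (r' : Coalgebra.Repr k y ι') :
    myconv f g (x ⊗ₜ[k] y) = ∑ i ∈ r.index, ∑ j ∈ r'.index,
      f (r.left i ⊗ₜ[k] r'.left j) * g (r.right i ⊗ₜ[k] r'.right j) :=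
  (myconv_repr f g (r.tprod r')).trans (Finset.sum_product _ _ _)

lemma comul_comp_mul' :
    TensorProduct.map (LinearMap.mul' k H) (LinearMap.mul' k H)
        ∘ₗ Coalgebra.comul (R := k) (A := H ⊗[k] H)
      = Coalgebra.comul (R := k) ∘ₗ LinearMap.mul' k H := by
  apply TensorProduct.ext'
  intro g g'
  have r := Coalgebra.Repr.arbitrary k g
  have r' := Coalgebra.Repr.arbitrary k g'
  simp only [LinearMap.comp_apply, LinearMap.mul'_apply]
  rw [← (r.tprod r').eq, map_sum]
  have hs : ∑ p ∈ (r.tprod r').index,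
      TensorProduct.map (LinearMap.mul' k H) (LinearMap.mul' k H)
        ((r.tprod r').left p ⊗ₜ[k] (r.tprod r').right p)
      = ∑ i ∈ r.index, ∑ j ∈ r'.index, (r.left i * r'.left j) ⊗ₜ[k] (r.right i * r'.right j) := by
    refine (Finset.sum_product _ _ (fun p =>
      TensorProduct.map (LinearMap.mul' k H) (LinearMap.mul' k H)
        ((r.tprod r').left p ⊗ₜ[k] (r.tprod r').right p))).trans ?_
    refine Finset.sum_congr rfl fun i _ => Finset.sum_congr rfl fun j _ => ?_
    simp only [tprod_left, tprod_right, TensorProduct.map_tmul, LinearMap.mul'_apply]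
  rw [hs, Bialgebra.comul_mul, ← r.eq, ← r'.eq, Finset.sum_mul_sum]
  exact Finset.sum_congr rfl fun i _ => Finset.sum_congr rfl fun j _ =>
    (Algebra.TensorProduct.tmul_mul_tmul _ _ _ _).symm

lemma convUnit_comp_mul' :
    (convUnit : H →ₗ[k] B) ∘ₗ LinearMap.mul' k H = (convUnit : H ⊗[k] H →ₗ[k] B) := by
  apply TensorProduct.ext'
  intro g g'
  simp only [LinearMap.comp_apply, LinearMap.mul'_apply, convUnit_apply]
  rw [Bialgebra.counit_mul, _root_.counit_tmul]

lemma myconv_comp_mul' {Y : Type} [Semiring Y] [Algebra k Y] (F G : H →ₗ[k] Y) :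
    myconv (F ∘ₗ LinearMap.mul' k H) (G ∘ₗ LinearMap.mul' k H)
      = myconv F G ∘ₗ LinearMap.mul' k H := by
  apply LinearMap.ext; intro x
  have h := congrFun (congrArg DFunLike.coe (comul_comp_mul' (k := k) (H := H))) x
  simp only [LinearMap.comp_apply] at h
  simp only [myconv, LinearMap.comp_apply, ← h]
  rw [← LinearMap.comp_apply (TensorProduct.map F G), ← TensorProduct.map_comp]

section NuFlip

variable (S : SmashProduct k H A B act) (φ : B →ₐ[k] A)

/-- `ν₁(g ⊗ g') = ν(g') ν(g)`. -/
noncomputable def nuFlip : H ⊗[k] H →ₗ[k] B :=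
  LinearMap.mul' k B ∘ₗ TensorProduct.map (smashNu S φ) (smashNu S φ)
    ∘ₗ (TensorProduct.comm k H H).toLinearMap

lemma nuFlip_tmul (g g' : H) :
    nuFlip S φ (g ⊗ₜ[k] g') = smashNu S φ g' * smashNu S φ g := by
  simp [nuFlip]

lemma conv_betaMul_nuFlip :
    myconv ((smashBeta S φ).toLinearMap ∘ₗ LinearMap.mul' k H) (nuFlip S φ) = convUnit := by
  apply TensorProduct.ext'
  intro g g'
  have r := Coalgebra.Repr.arbitrary k g
  have r' := Coalgebra.Repr.arbitrary k g'
  rw [tprod_sum _ _ r r', convUnit_apply, _root_.counit_tmul]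
  have hterm : ∀ i ∈ r.index, (∑ j ∈ r'.index,
      ((smashBeta S φ).toLinearMap ∘ₗ LinearMap.mul' k H) (r.left i ⊗ₜ[k] r'.left j)
        * nuFlip S φ (r.right i ⊗ₜ[k] r'.right j))
      = (smashBeta S φ (r.left i) * smashNu S φ (r.right i)) *
          algebraMap k B (Coalgebra.counit g') := by
    intro i _
    have h1 : ∀ j ∈ r'.index,
        ((smashBeta S φ).toLinearMap ∘ₗ LinearMap.mul' k H) (r.left i ⊗ₜ[k] r'.left j)
          * nuFlip S φ (r.right i ⊗ₜ[k] r'.right j)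
        = smashBeta S φ (r.left i) *
            ((smashBeta S φ (r'.left j) * smashNu S φ (r'.right j)) * smashNu S φ (r.right i)) := by
      intro j _
      rw [LinearMap.comp_apply, LinearMap.mul'_apply, nuFlip_tmul, AlgHom.toLinearMap_apply,
        map_mul]
      simp only [mul_assoc]
    rw [Finset.sum_congr rfl h1, ← Finset.mul_sum, ← Finset.sum_mul, sum_beta_nu S φ r',
      Algebra.commutes, ← mul_assoc]
  rw [Finset.sum_congr rfl hterm, ← Finset.sum_mul, sum_beta_nu S φ r, ← map_mul]

lemma conv_nuFlip_betaMul :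
    myconv (nuFlip S φ) ((smashBeta S φ).toLinearMap ∘ₗ LinearMap.mul' k H) = convUnit := by
  apply TensorProduct.ext'
  intro g g'
  have r := Coalgebra.Repr.arbitrary k g
  have r' := Coalgebra.Repr.arbitrary k g'
  rw [tprod_sum _ _ r r', convUnit_apply, _root_.counit_tmul, Finset.sum_comm]
  have hterm : ∀ j ∈ r'.index, (∑ i ∈ r.index,
      nuFlip S φ (r.left i ⊗ₜ[k] r'.left j)
        * ((smashBeta S φ).toLinearMap ∘ₗ LinearMap.mul' k H) (r.right i ⊗ₜ[k] r'.right j))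
      = (smashNu S φ (r'.left j) * smashBeta S φ (r'.right j)) *
          algebraMap k B (Coalgebra.counit g) := by
    intro j _
    have h1 : ∀ i ∈ r.index,
        nuFlip S φ (r.left i ⊗ₜ[k] r'.left j)
          * ((smashBeta S φ).toLinearMap ∘ₗ LinearMap.mul' k H) (r.right i ⊗ₜ[k] r'.right j)
        = smashNu S φ (r'.left j) *
            ((smashNu S φ (r.left i) * smashBeta S φ (r.right i)) * smashBeta S φ (r'.right j)) := by
      intro i _
      rw [LinearMap.comp_apply, LinearMap.mul'_apply, nuFlip_tmul, AlgHom.toLinearMap_apply,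
        map_mul]
      simp only [mul_assoc]
    rw [Finset.sum_congr rfl h1, ← Finset.mul_sum, ← Finset.sum_mul, sum_nu_beta S φ r,
      Algebra.commutes, ← mul_assoc]
  rw [Finset.sum_congr rfl hterm, ← Finset.sum_mul, sum_nu_beta S φ r', ← map_mul,
    mul_comm (Coalgebra.counit (R := k) g') (Coalgebra.counit (R := k) g)]

lemma nuFlip_eq : nuFlip S φ = smashNu S φ ∘ₗ LinearMap.mul' k H := by
  calc nuFlip S φ = myconv (nuFlip S φ) convUnit := (myconv_unit_right _).symm
    _ = myconv (nuFlip S φ) (myconv ((smashBeta S φ).toLinearMap ∘ₗ LinearMap.mul' k H)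
          (smashNu S φ ∘ₗ LinearMap.mul' k H)) := by
        rw [myconv_comp_mul', conv_beta_nu, convUnit_comp_mul']
    _ = myconv (myconv (nuFlip S φ) ((smashBeta S φ).toLinearMap ∘ₗ LinearMap.mul' k H))
          (smashNu S φ ∘ₗ LinearMap.mul' k H) := (myconv_assoc _ _ _).symm
    _ = myconv convUnit (smashNu S φ ∘ₗ LinearMap.mul' k H) := by rw [conv_nuFlip_betaMul]
    _ = smashNu S φ ∘ₗ LinearMap.mul' k H := myconv_unit_left _

lemma zeta_mul (hφ : ∀ a : A, φ (S.ιA a) = a) (g g' : H) :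
    zeta S φ (g * g') = zeta S φ g * zeta S φ g' := by
  have r := Coalgebra.Repr.arbitrary k g
  have r' := Coalgebra.Repr.arbitrary k g'
  have hz' : ∑ j ∈ r'.index, S.ιH (r'.left j) * smashNu S φ (r'.right j) = zeta S φ g' := by
    rw [zeta_eq_conv, myconv_repr _ _ r']
    exact Finset.sum_congr rfl fun j _ => rfl
  have hL : zeta S φ (g * g')
      = ∑ i ∈ r.index, ∑ j ∈ r'.index,
          S.ιH (r.left i) * (S.ιH (r'.left j) * smashNu S φ (r'.right j) * smashNu S φ (r.right i)) := by
    have h1 : zeta S φ (g * g')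
        = myconv (S.ιH.toLinearMap ∘ₗ LinearMap.mul' k H) (nuFlip S φ) (g ⊗ₜ[k] g') := by
      calc zeta S φ (g * g')
          = (myconv S.ιH.toLinearMap (smashNu S φ) ∘ₗ LinearMap.mul' k H) (g ⊗ₜ[k] g') := by
            rw [zeta_eq_conv]; simp only [LinearMap.comp_apply, LinearMap.mul'_apply]
        _ = myconv (S.ιH.toLinearMap ∘ₗ LinearMap.mul' k H)
              (smashNu S φ ∘ₗ LinearMap.mul' k H) (g ⊗ₜ[k] g') := by rw [myconv_comp_mul']
        _ = myconv (S.ιH.toLinearMap ∘ₗ LinearMap.mul' k H) (nuFlip S φ) (g ⊗ₜ[k] g') := by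
            rw [nuFlip_eq]
    rw [h1, tprod_sum _ _ r r']
    refine Finset.sum_congr rfl fun i _ => Finset.sum_congr rfl fun j _ => ?_
    rw [LinearMap.comp_apply, LinearMap.mul'_apply, nuFlip_tmul, AlgHom.toLinearMap_apply,
      map_mul]
    simp only [mul_assoc]
  have hR : zeta S φ g * zeta S φ g'
      = ∑ i ∈ r.index, S.ιH (r.left i) * (smashNu S φ (r.right i) * zeta S φ g') := by
    rw [zeta_eq_conv, myconv_repr _ _ r, Finset.sum_mul]
    exact Finset.sum_congr rfl fun i _ => by
      rw [AlgHom.toLinearMap_apply, mul_assoc]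
  rw [hL, hR]
  refine Finset.sum_congr rfl fun i _ => ?_
  rw [← Finset.mul_sum]
  congr 1
  have h2 : ∑ j ∈ r'.index,
      S.ιH (r'.left j) * smashNu S φ (r'.right j) * smashNu S φ (r.right i)
      = zeta S φ g' * smashNu S φ (r.right i) := by
    rw [← Finset.sum_mul, hz']
  rw [h2, smashNu_apply, smashBeta_apply]
  exact (zeta_commute S φ hφ _ _).symm

end NuFlip

end SmashAux2



section Injectivity

open Coalgebra HopfAlgebra

variable (S : SmashProduct k H A B act) (φ : B →ₐ[k] A)

/-- `w(g) = Σ g₍₁₎ ⊗ φ(S g₍₂₎)`. -/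
noncomputable def wmap : H →ₗ[k] H ⊗[k] A :=
  LinearMap.lTensor H (φ.toLinearMap ∘ₗ S.ιH.toLinearMap ∘ₗ HopfAlgebra.antipode (R := k))
    ∘ₗ Coalgebra.comul

/-- `θ(g ⊗ a) = Σ g₍₁₎ ⊗ φ(g₍₂₎) a`, a left inverse of `w` up to `⊗ 1`. -/
noncomputable def thetaMap : H ⊗[k] A →ₗ[k] H ⊗[k] A :=
  LinearMap.lTensor H (LinearMap.mul' k A) ∘ₗ (TensorProduct.assoc k H A A).toLinearMap ∘ₗ
    LinearMap.rTensor A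
      (LinearMap.lTensor H (φ.toLinearMap ∘ₗ S.ιH.toLinearMap) ∘ₗ Coalgebra.comul)

lemma wmap_repr {g : H} {ι : Type*} (r : Coalgebra.Repr k g ι) :
    wmap S φ g = ∑ i ∈ r.index,
      r.left i ⊗ₜ[k] (φ (S.ιH (HopfAlgebra.antipode (R := k) (r.right i)))) := by
  rw [wmap, LinearMap.comp_apply, ← r.eq, map_sum]
  exact Finset.sum_congr rfl fun i _ => rfl

lemma thetaMap_wmap (g : H) : thetaMap S φ (wmap S φ g) = g ⊗ₜ[k] (1 : A) := by
  have r := Coalgebra.Repr.arbitrary k g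
  have a₁ : ∀ i : H × H, Coalgebra.Repr k (r.left i) (H × H) := fun i => Coalgebra.Repr.arbitrary k _
  have a₂ : ∀ i : H × H, Coalgebra.Repr k (r.right i) (H × H) := fun i => Coalgebra.Repr.arbitrary k _
  set dφ : H →ₗ[k] A := φ.toLinearMap ∘ₗ S.ιH.toLinearMap with hdφ
  set cφ : H →ₗ[k] A := dφ ∘ₗ HopfAlgebra.antipode (R := k) with hcφ
  have hθ : thetaMap S φ (wmap S φ g)
      = ∑ i ∈ r.index, ∑ j ∈ (a₁ i).index,
          (a₁ i).left j ⊗ₜ[k] (dφ ((a₁ i).right j) * cφ (r.right i)) := by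
    rw [wmap_repr S φ r, map_sum]
    refine Finset.sum_congr rfl fun i _ => ?_
    rw [thetaMap]
    simp only [LinearMap.comp_apply, LinearMap.rTensor_tmul, LinearMap.comp_apply]
    rw [← (a₁ i).eq, map_sum]
    simp only [LinearMap.lTensor_tmul, TensorProduct.sum_tmul, map_sum,
      TensorProduct.assoc_tmul]
    exact Finset.sum_congr rfl fun j _ => rfl
  have key := congrArg
    (⇑(LinearMap.lTensor H (LinearMap.mul' k A ∘ₗ TensorProduct.map dφ cφ)))
    (Coalgebra.sum_tmul_tmul_eq r a₁ a₂)
  simp only [map_sum, LinearMap.lTensor_tmul, LinearMap.comp_apply, TensorProduct.map_tmul,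
    LinearMap.mul'_apply] at key
  have hinner : ∀ i ∈ r.index,
      ∑ j ∈ (a₂ i).index, r.left i ⊗ₜ[k] (dφ ((a₂ i).left j) * cφ ((a₂ i).right j))
      = r.left i ⊗ₜ[k] algebraMap k A (Coalgebra.counit (R := k) (r.right i)) := by
    intro i _
    rw [← TensorProduct.tmul_sum]
    congr 1
    have hterm : ∀ j ∈ (a₂ i).index, dφ ((a₂ i).left j) * cφ ((a₂ i).right j)
        = (φ.comp S.ιH)
            ((a₂ i).left j * HopfAlgebra.antipode (R := k) ((a₂ i).right j)) := by
      intro j _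
      rw [map_mul]
      rfl
    rw [Finset.sum_congr rfl hterm, ← map_sum, HopfAlgebra.sum_mul_antipode_eq_algebraMap_counit (a₂ i),
      AlgHom.commutes]
  have hfinal : ∑ i ∈ r.index,
      r.left i ⊗ₜ[k] algebraMap k A (Coalgebra.counit (R := k) (r.right i))
      = g ⊗ₜ[k] (1 : A) := by
    have h := congrArg (⇑(LinearMap.lTensor H (Algebra.linearMap k A)))
      (Coalgebra.sum_tmul_counit_eq r)
    simpa only [map_sum, LinearMap.lTensor_tmul, Algebra.linearMap_apply, map_one] using h
  rw [hθ, key, Finset.sum_congr rfl hinner, hfinal]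

lemma exists_one_functional [Nontrivial A] : ∃ f : A →ₗ[k] k, f 1 = 1 := by
  have h1 : Function.Injective (LinearMap.toSpanSingleton k A 1) := by
    intro s t hst
    have h2 : algebraMap k A s = algebraMap k A t := by
      simpa only [LinearMap.toSpanSingleton_apply, Algebra.smul_def, mul_one] using hst
    exact (algebraMap k A).injective h2
  obtain ⟨f, hf⟩ := (LinearMap.toSpanSingleton k A 1).exists_leftInverse_of_injective
    (LinearMap.ker_eq_bot.mpr h1)
  refine ⟨f, ?_⟩
  have h3 := LinearMap.congr_fun hf 1
  simpa only [LinearMap.comp_apply, LinearMap.toSpanSingleton_apply, one_smul,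
    LinearMap.id_coe, id_eq] using h3

lemma wmap_injective [Nontrivial A] : Function.Injective (wmap S φ) := by
  obtain ⟨f, hf⟩ := exists_one_functional (k := k) (A := A)
  intro g₁ g₂ hg
  have h2 : (g₁ ⊗ₜ[k] (1 : A)) = (g₂ ⊗ₜ[k] (1 : A)) := by
    rw [← thetaMap_wmap S φ g₁, ← thetaMap_wmap S φ g₂, hg]
  have h3 := congrArg (fun t => TensorProduct.rid k H (LinearMap.lTensor H f t)) h2
  simpa only [LinearMap.lTensor_tmul, hf, TensorProduct.rid_tmul, one_smul] using h3

end Injectivity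

section Transfer

open Coalgebra HopfAlgebra

variable {H' B' : Type} [Ring H'] [Ring B'] [HopfAlgebra k H'] [Algebra k B']
  {act' : A →ₗ[k] H' →ₗ[k] A}
  (S : SmashProduct k H A B act) (S' : SmashProduct k H' A B' act')
  (ι : H' →ₐ[k] H) (j : B' →ₐ[k] B) (φ' : B' →ₐ[k] A)

lemma transfer_eq (hjH : ∀ g, j (S'.ιH g) = S.ιH (ι g)) (hjA : ∀ a, j (S'.ιA a) = S.ιA a)
    (g : H') :
    j (zeta S' φ' g) = LinearMap.mul' k B (TensorProduct.map S.ιH.toLinearMap S.ιA.toLinearMap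
      (LinearMap.rTensor A ι.toLinearMap (wmap S' φ' g))) := by
  have r := Coalgebra.Repr.arbitrary k g
  rw [wmap_repr S' φ' r, zeta_eq_conv, myconv_repr _ _ r, map_sum, map_sum, map_sum, map_sum]
  refine Finset.sum_congr rfl fun i _ => ?_
  rw [LinearMap.rTensor_tmul, TensorProduct.map_tmul, LinearMap.mul'_apply]
  simp only [map_mul, AlgHom.toLinearMap_apply, smashNu_apply, smashBeta_apply, hjH, hjA]

lemma transfer_injective [Nontrivial A] (hjH : ∀ g, j (S'.ιH g) = S.ιH (ι g))
    (hjA : ∀ a, j (S'.ιA a) = S.ιA a) (hι : Function.Injective ι) :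
    Function.Injective (j.toLinearMap ∘ₗ zeta S' φ') := by
  have hfun : ⇑(j.toLinearMap ∘ₗ zeta S' φ') =
      (fun x : H ⊗[k] A =>
        LinearMap.mul' k B (TensorProduct.map S.ιH.toLinearMap S.ιA.toLinearMap x))
        ∘ ⇑(LinearMap.rTensor A ι.toLinearMap) ∘ ⇑(wmap S' φ') := by
    funext g
    simp only [LinearMap.comp_apply, AlgHom.toLinearMap_apply, Function.comp_apply]
    exact transfer_eq S S' ι j φ' hjH hjA g
  rw [hfun]
  exact S.mulMap_bij.injective.comp
    ((Module.Flat.rTensor_preserves_injective_linearMap (M := A) ι.toLinearMap hι).comp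
      (wmap_injective S' φ'))

end Transfer


/-- each `ζ̃±` is an injective algebra homomorphism from `H±` into the
commutant of `A` in `A >⋊ H`. -/
theorem zetaPM_injective_hom_commutant [Nontrivial A]
    (hMA : RightModuleAlgebra k H A act)
    (G : GaussSetting k H A B Hp Hm Bp Bm act actp actm)
    (φp : Bp →ₐ[k] A) (φm : Bm →ₐ[k] A)
    (hφp : ∀ a : A, φp (G.Sp.ιA a) = a) (hφm : ∀ a : A, φm (G.Sm.ιA a) = a) :
    (Function.Injective (zetaP G φp) ∧ zetaP G φp 1 = 1 ∧
      (∀ g g' : Hp, zetaP G φp (g * g') = zetaP G φp g * zetaP G φp g') ∧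
      ∀ (g : Hp) (a : A), zetaP G φp g * G.S.ιA a = G.S.ιA a * zetaP G φp g) ∧
    (Function.Injective (zetaM G φm) ∧ zetaM G φm 1 = 1 ∧
      (∀ g g' : Hm, zetaM G φm (g * g') = zetaM G φm g * zetaM G φm g') ∧
      ∀ (g : Hm) (a : A), zetaM G φm g * G.S.ιA a = G.S.ιA a * zetaM G φm g) := by
  refine ⟨⟨?_, ?_, ?_, ?_⟩, ?_, ?_, ?_, ?_⟩
  · exact transfer_injective G.S G.Sp G.ιp G.jp φp G.jp_H G.jp_A G.ιp_inj
  · show G.jp.toLinearMap (zeta G.Sp φp 1) = 1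
    rw [zeta_one', AlgHom.toLinearMap_apply, map_one]
  · intro g g'
    show G.jp.toLinearMap (zeta G.Sp φp (g * g')) = _ * _
    rw [zeta_mul G.Sp φp hφp, AlgHom.toLinearMap_apply, map_mul]
    rfl
  · intro g a
    have h := congrArg G.jp (zeta_commute G.Sp φp hφp a g)
    rw [map_mul, map_mul, G.jp_A] at h
    exact (h.symm.trans rfl : _)
  · exact transfer_injective G.S G.Sm G.ιm G.jm φm G.jm_H G.jm_A G.ιm_inj
  · show G.jm.toLinearMap (zeta G.Sm φm 1) = 1
    rw [zeta_one', AlgHom.toLinearMap_apply, map_one]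
  · intro g g'
    show G.jm.toLinearMap (zeta G.Sm φm (g * g')) = _ * _
    rw [zeta_mul G.Sm φm hφm, AlgHom.toLinearMap_apply, map_mul]
    rfl
  · intro g a
    have h := congrArg G.jm (zeta_commute G.Sm φm hφm a g)
    rw [map_mul, map_mul, G.jm_A] at h
    exact (h.symm.trans rfl : _)
end

section
/- Under the Gauss-decomposition assumptions, the cross-product factorizes as A >⋊ H = ζ̃⁺(H⁺) ζ̃⁻(H⁻) A = ζ̃⁻(H⁻) ζ̃⁺(H⁺) A, i.e., every element of A >⋊ H is a sum of products ζ̃⁺(g⁺) ζ̃⁻(g⁻) a (and likewise in the opposite order). -/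
open TensorProduct

variable {k : Type} [Field k] {H A B : Type} [Ring H] [Ring A] [Ring B]
  [HopfAlgebra k H] [Algebra k A] [Algebra k B] {act : A →ₗ[k] H →ₗ[k] A}

variable {Hp Hm Bp Bm : Type} [Ring Hp] [Ring Hm] [Ring Bp] [Ring Bm]
  [HopfAlgebra k Hp] [HopfAlgebra k Hm] [Algebra k Bp] [Algebra k Bm]
  {actp : A →ₗ[k] Hp →ₗ[k] A} {actm : A →ₗ[k] Hm →ₗ[k] A}

open Coalgebra HopfAlgebra in
/-- Straightening relation in summed (Sweedler) form. -/
lemma SmashProduct.straighten_repr (S : SmashProduct k H A B act) (a : A) (g : H)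
    {ι : Type*} (r : Coalgebra.Repr k g ι) :
    S.ιA a * S.ιH g = ∑ i ∈ r.index, S.ιH (r.left i) * S.ιA (act a (r.right i)) := by
  rw [S.straighten, ← r.eq, map_sum, map_sum]
  simp [LinearMap.mul'_apply]

open Coalgebra HopfAlgebra in
lemma zeta_repr (S : SmashProduct k H A B act) (φ : B →ₐ[k] A) (g : H)
    {ι : Type*} (r : Coalgebra.Repr k g ι) :
    zeta S φ g = ∑ i ∈ r.index,
      S.ιH (r.left i) * S.ιA (φ (S.ιH (antipode (R := k) (r.right i)))) := by
  rw [zeta]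
  simp only [LinearMap.comp_apply]
  rw [← r.eq, map_sum, map_sum]
  simp [LinearMap.mul'_apply]

open Coalgebra HopfAlgebra in
/-- Key identity: `ιH g = ∑ ζ(g₁) ιA(φ(ιH g₂))`. -/
lemma zeta_expand (S : SmashProduct k H A B act) (φ : B →ₐ[k] A) (g : H)
    {ι : Type*} (r : Coalgebra.Repr k g ι) :
    S.ιH g = ∑ i ∈ r.index, zeta S φ (r.left i) * S.ιA (φ (S.ιH (r.right i))) := by
  classical
  set f : H →ₐ[k] B := (S.ιA.comp φ).comp S.ιH with hf
  have hfa : ∀ x : H, S.ιA (φ (S.ιH x)) = f x := fun x => rfl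
  set a₁ : (i : ι) → Coalgebra.Repr k (r.left i) (H × H) := fun i => ℛ k (r.left i) with ha1
  set a₂ : (i : ι) → Coalgebra.Repr k (r.right i) (H × H) := fun i => ℛ k (r.right i) with ha2
  set G : H ⊗[k] (H ⊗[k] H) →ₗ[k] B :=
    (LinearMap.mul' k B) ∘ₗ
      (TensorProduct.map S.ιH.toLinearMap
        (f.toLinearMap ∘ₗ (LinearMap.mul' k H) ∘ₗ
          (LinearMap.rTensor H (antipode (R := k) (A := H))))) with hG
  have hGapp : ∀ x y z : H, G (x ⊗ₜ[k] (y ⊗ₜ[k] z)) =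
      S.ιH x * f (antipode (R := k) y * z) := by
    intro x y z
    simp [hG, LinearMap.mul'_apply]
  have key := Coalgebra.sum_tmul_tmul_eq r a₁ a₂
  have key2 := congrArg G key
  rw [map_sum, map_sum] at key2
  simp only [map_sum, hGapp] at key2
  have lhs_eq : ∑ i ∈ r.index, zeta S φ (r.left i) * S.ιA (φ (S.ιH (r.right i))) =
      ∑ i ∈ r.index, ∑ j ∈ (a₁ i).index,
        S.ιH ((a₁ i).left j) * f (antipode (R := k) ((a₁ i).right j) * r.right i) := by
    refine Finset.sum_congr rfl fun i _ => ?_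
    rw [zeta_repr S φ (r.left i) (a₁ i), Finset.sum_mul]
    refine Finset.sum_congr rfl fun j _ => ?_
    rw [hfa, hfa, mul_assoc, ← map_mul]
  have rhs_eq : ∑ i ∈ r.index, ∑ j ∈ (a₂ i).index,
      S.ιH (r.left i) * f (antipode (R := k) ((a₂ i).left j) * (a₂ i).right j) =
      S.ιH g := by
    have step1 : ∀ i, ∑ j ∈ (a₂ i).index,
        S.ιH (r.left i) * f (antipode (R := k) ((a₂ i).left j) * (a₂ i).right j) =
        S.ιH (r.left i) * algebraMap k B (counit (R := k) (r.right i)) := by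
      intro i
      rw [← Finset.mul_sum, ← map_sum f, HopfAlgebra.sum_antipode_mul_eq_algebraMap_counit (a₂ i),
        AlgHom.commutes]
    simp only [step1]
    have : ∀ i, S.ιH (r.left i) * algebraMap k B (counit (R := k) (r.right i)) =
        S.ιH (counit (R := k) (r.right i) • r.left i) := by
      intro i
      rw [map_smul, ← Algebra.commutes, ← Algebra.smul_def]
    simp only [this]
    rw [← map_sum]
    congr 1
    have := Coalgebra.sum_tmul_counit_eq (R := k) r
    have := congrArg (TensorProduct.rid k H) this
    rw [map_sum] at this
    simpa [TensorProduct.rid_tmul] using this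
  rw [lhs_eq, key2, rhs_eq]

section Claims

variable (G : GaussSetting k H A B Hp Hm Bp Bm act actp actm)
  (φp : Bp →ₐ[k] A) (φm : Bm →ₐ[k] A)

open Coalgebra HopfAlgebra

/-- The span of the decoupled products. -/
def Mspan : Submodule k B :=
  Submodule.span k {x : B | ∃ (gp : Hp) (gm : Hm) (a : A),
      x = zetaP G φp gp * zetaM G φm gm * G.S.ιA a}


lemma claim0 (gp : Hp) (w : Hm) (d : A) :
    zetaP G φp gp * G.S.ιH (G.ιm w) * G.S.ιA d ∈ Mspan G φp φm := by
  classical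
  have h1 : G.S.ιH (G.ιm w) = ∑ i ∈ (ℛ k w).index,
      zetaM G φm ((ℛ k w).left i) * G.S.ιA (φm (G.Sm.ιH ((ℛ k w).right i))) := by
    rw [← G.jm_H, zeta_expand G.Sm φm w (ℛ k w), map_sum]
    refine Finset.sum_congr rfl fun i _ => ?_
    rw [map_mul, G.jm_A]
    rfl
  rw [h1, Finset.mul_sum, Finset.sum_mul]
  refine Submodule.sum_mem _ fun i _ => ?_
  apply Submodule.subset_span
  show ∃ (gp : Hp) (gm : Hm) (a : A), _ = zetaP G φp gp * zetaM G φm gm * G.S.ιA a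
  refine ⟨gp, (ℛ k w).left i, φm (G.Sm.ιH ((ℛ k w).right i)) * d, ?_⟩
  rw [map_mul, mul_assoc, mul_assoc, mul_assoc]

lemma claim1 (gp : Hp) (b : A) (v : Hm) (a : A) :
    zetaP G φp gp * G.S.ιA b * G.S.ιH (G.ιm v) * G.S.ιA a ∈ Mspan G φp φm := by
  classical
  have h1 : G.S.ιA b * G.S.ιH (G.ιm v) = ∑ i ∈ (ℛ k v).index,
      G.S.ιH (G.ιm ((ℛ k v).left i)) * G.S.ιA (actm b ((ℛ k v).right i)) := by
    rw [← G.jm_A, ← G.jm_H, ← map_mul,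
      G.Sm.straighten_repr b v (ℛ k v), map_sum]
    refine Finset.sum_congr rfl fun i _ => ?_
    rw [map_mul, G.jm_H, G.jm_A]
  rw [mul_assoc (zetaP G φp gp) (G.S.ιA b) (G.S.ιH (G.ιm v)), h1,
    Finset.mul_sum, Finset.sum_mul]
  refine Submodule.sum_mem _ fun i _ => ?_
  have : zetaP G φp gp * (G.S.ιH (G.ιm ((ℛ k v).left i)) *
      G.S.ιA (actm b ((ℛ k v).right i))) * G.S.ιA a =
      zetaP G φp gp * G.S.ιH (G.ιm ((ℛ k v).left i)) *
      G.S.ιA (actm b ((ℛ k v).right i) * a) := by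
    rw [map_mul, mul_assoc, mul_assoc, mul_assoc]
  rw [this]
  exact claim0 G φp φm _ _ _

lemma claim2 (u : Hp) (v : Hm) (a : A) :
    G.S.ιH (G.ιp u) * G.S.ιH (G.ιm v) * G.S.ιA a ∈ Mspan G φp φm := by
  classical
  have h1 : G.S.ιH (G.ιp u) = ∑ i ∈ (ℛ k u).index,
      zetaP G φp ((ℛ k u).left i) * G.S.ιA (φp (G.Sp.ιH ((ℛ k u).right i))) := by
    rw [← G.jp_H, zeta_expand G.Sp φp u (ℛ k u), map_sum]
    refine Finset.sum_congr rfl fun i _ => ?_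
    rw [map_mul, G.jp_A]
    rfl
  rw [h1, Finset.sum_mul, Finset.sum_mul]
  refine Submodule.sum_mem _ fun i _ => ?_
  have : zetaP G φp ((ℛ k u).left i) * G.S.ιA (φp (G.Sp.ιH ((ℛ k u).right i))) *
      G.S.ιH (G.ιm v) * G.S.ιA a =
      zetaP G φp ((ℛ k u).left i) * G.S.ιA (φp (G.Sp.ιH ((ℛ k u).right i))) *
      G.S.ιH (G.ιm v) * G.S.ιA a := rfl
  exact claim1 G φp φm _ _ _ _

lemma claim3 (g : H) (a : A) : G.S.ιH g * G.S.ιA a ∈ Mspan G φp φm := by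
  have hg : g ∈ Submodule.span k {x : H | ∃ (u : Hp) (v : Hm), x = G.ιp u * G.ιm v} := by
    rw [G.gauss_pm]; trivial
  induction hg using Submodule.span_induction with
  | mem x hx =>
    obtain ⟨u, v, rfl⟩ := hx
    rw [map_mul]
    exact claim2 G φp φm u v a
  | zero => simp
  | add x y _ _ hx hy =>
    rw [map_add, add_mul]
    exact Submodule.add_mem _ hx hy
  | smul c x _ hx =>
    rw [map_smul, smul_mul_assoc]
    exact Submodule.smul_mem _ c hx

lemma half : Mspan G φp φm = ⊤ := by
  rw [eq_top_iff]
  rintro b -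
  obtain ⟨x, hx⟩ := G.S.mulMap_bij.2 b
  rw [← hx]
  clear hx
  induction x using TensorProduct.induction_on with
  | zero => simp
  | tmul g a =>
    simpa [LinearMap.mul'_apply] using claim3 G φp φm g a
  | add x y hx hy =>
    simpa [map_add] using Submodule.add_mem _ hx hy

end Claims

/-- Swap the roles of `H⁺` and `H⁻`. -/
def GaussSetting.swap (G : GaussSetting k H A B Hp Hm Bp Bm act actp actm) :
    GaussSetting k H A B Hm Hp Bm Bp act actm actp where
  S := G.S
  Sp := G.Sm
  Sm := G.Sp
  ιp := G.ιm
  ιm := G.ιp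
  ιp_inj := G.ιm_inj
  ιm_inj := G.ιp_inj
  ιp_comul := G.ιm_comul
  ιm_comul := G.ιp_comul
  ιp_antipode := G.ιm_antipode
  ιm_antipode := G.ιp_antipode
  actp_eq := G.actm_eq
  actm_eq := G.actp_eq
  jp := G.jm
  jm := G.jp
  jp_H := G.jm_H
  jp_A := G.jm_A
  jm_H := G.jp_H
  jm_A := G.jp_A
  gauss_pm := G.gauss_mp
  gauss_mp := G.gauss_pm

/-- `A >⋊ H = ζ̃⁺(H⁺) ζ̃⁻(H⁻) A = ζ̃⁻(H⁻) ζ̃⁺(H⁺) A`. -/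
theorem smash_factorization_pm
    (hMA : RightModuleAlgebra k H A act)
    (G : GaussSetting k H A B Hp Hm Bp Bm act actp actm)
    (φp : Bp →ₐ[k] A) (φm : Bm →ₐ[k] A)
    (hφp : ∀ a : A, φp (G.Sp.ιA a) = a) (hφm : ∀ a : A, φm (G.Sm.ιA a) = a) :
    Submodule.span k {x : B | ∃ (gp : Hp) (gm : Hm) (a : A),
      x = zetaP G φp gp * zetaM G φm gm * G.S.ιA a} = ⊤ ∧
    Submodule.span k {x : B | ∃ (gm : Hm) (gp : Hp) (a : A),
      x = zetaM G φm gm * zetaP G φp gp * G.S.ιA a} = ⊤ :=  by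
  constructor
  · exact half G φp φm
  · exact half G.swap φm φp
end

section
/- Suppose H is a Hopf *-algebra, A a H-module *-algebra, and A >⋊ H is equipped with the induced *-structure. If φ̃ : A >⋊ H → A is a *-homomorphism, then ζ̃(g) = g₍₁₎ φ̃(S g₍₂₎) is also a *-homomorphism, i.e., ζ̃(g*) = ζ̃(g)* for all g ∈ H. -/
section ZHopfHelpers
open TensorProduct Coalgebra HopfAlgebra LinearMap

lemma zs_sum_sum_comm {M : Type*} [AddCommMonoid M] {I I' : Type*} {JJ : I → Type*}
    {KK : I' → Type*} (s : Finset I) (t : ∀ i, Finset (JJ i)) (s' : Finset I')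
    (t' : ∀ i', Finset (KK i')) (f : ∀ i, JJ i → ∀ i', KK i' → M) :
    ∑ i ∈ s, ∑ j ∈ t i, ∑ i' ∈ s', ∑ l ∈ t' i', f i j i' l =
    ∑ i' ∈ s', ∑ l ∈ t' i', ∑ i ∈ s, ∑ j ∈ t i, f i j i' l := by
  calc ∑ i ∈ s, ∑ j ∈ t i, ∑ i' ∈ s', ∑ l ∈ t' i', f i j i' l
      = ∑ p ∈ s.sigma t, ∑ q ∈ s'.sigma t', f p.1 p.2 q.1 q.2 := by
        rw [Finset.sum_sigma]
        exact Finset.sum_congr rfl fun i _ => Finset.sum_congr rfl fun j _ => by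
          rw [Finset.sum_sigma]
    _ = ∑ q ∈ s'.sigma t', ∑ p ∈ s.sigma t, f p.1 p.2 q.1 q.2 := Finset.sum_comm
    _ = _ := by
        rw [Finset.sum_sigma]
        exact Finset.sum_congr rfl fun i _ => Finset.sum_congr rfl fun j _ => by
          rw [Finset.sum_sigma]

variable {R : Type*} [CommSemiring R] {C : Type*} [Semiring C] [HopfAlgebra R C]

lemma zs_sum_counit_smul_right {a : C} {ι : Type*} (r : Repr R a ι) :
    ∑ i ∈ r.index, counit (R := R) (r.left i) • r.right i = a := by
  have h := congrArg (TensorProduct.lid R C) (sum_counit_tmul_eq (R := R) r)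
  simp only [map_sum, lid_tmul] at h
  simpa using h

lemma zs_sum_counit_smul_left {a : C} {ι : Type*} (r : Repr R a ι) :
    ∑ i ∈ r.index, counit (R := R) (r.right i) • r.left i = a := by
  have h := congrArg (TensorProduct.rid R C) (sum_tmul_counit_eq (R := R) r)
  simp only [map_sum, rid_tmul] at h
  simpa using h

lemma zs_antipode_one : antipode (R := R) (1 : C) = 1 := by
  have h := sum_antipode_mul_eq_algebraMap_counit (R := R) (a := (1 : C)) (ι := Fin 1)
    { index := (Finset.univ : Finset (Fin 1)), left := fun _ => 1, right := fun _ => 1,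
      eq := by simp [Algebra.TensorProduct.one_def] }
  simpa using h

lemma zs_antipode_mul (x y : C) :
    antipode (R := R) (x * y) = antipode (R := R) y * antipode (R := R) x := by
  have rx : Repr R x (C × C) := ℛ R x
  have ry : Repr R y (C × C) := ℛ R y
  have rxl : ∀ i, Repr R (rx.left i) (C × C) := fun i => ℛ R _
  have rxr : ∀ i, Repr R (rx.right i) (C × C) := fun i => ℛ R _
  have ryl : ∀ j, Repr R (ry.left j) (C × C) := fun j => ℛ R _
  have ryr : ∀ j, Repr R (ry.right j) (C × C) := fun j => ℛ R _
  set S : C →ₗ[R] C := antipode (R := R) with hS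
  -- the big intermediate sum
  set X : C := ∑ j ∈ ry.index, ∑ q ∈ (ryl j).index, ∑ i ∈ rx.index, ∑ p ∈ (rxl i).index,
      S ((rxl i).left p * (ryl j).left q) *
        (((rxl i).right p * (ryl j).right q) * (S (ry.right j) * S (rx.right i))) with hX
  -- Part 1 : X = S y * S x
  have part1 : X = S y * S x := by
    -- reorder sums to j, i, p, q
    have hswap : X = ∑ j ∈ ry.index, ∑ i ∈ rx.index, ∑ p ∈ (rxl i).index,
        ∑ q ∈ (ryl j).index,
        S ((rxl i).left p * (ryl j).left q) *
          (((rxl i).right p * (ryl j).right q) * (S (ry.right j) * S (rx.right i))) := by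
      rw [hX]
      refine Finset.sum_congr rfl fun j _ => ?_
      rw [Finset.sum_comm]
      refine Finset.sum_congr rfl fun i _ => Finset.sum_comm
    rw [hswap]
    -- inner collapse via comul of a product
    have hinner : ∀ j ∈ ry.index, ∀ i ∈ rx.index,
        ∑ p ∈ (rxl i).index, ∑ q ∈ (ryl j).index,
          S ((rxl i).left p * (ryl j).left q) * ((rxl i).right p * (ryl j).right q)
        = algebraMap R C (counit (R := R) (rx.left i) * counit (R := R) (ry.left j)) := by
      intro j _ i _
      have hcm : Coalgebra.comul (R := R) (rx.left i * ry.left j) =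
          ∑ p ∈ (rxl i).index, ∑ q ∈ (ryl j).index,
            ((rxl i).left p * (ryl j).left q) ⊗ₜ[R] ((rxl i).right p * (ryl j).right q) := by
        rw [Bialgebra.comul_mul, ← (rxl i).eq, ← (ryl j).eq, Finset.sum_mul_sum]
        simp_rw [Algebra.TensorProduct.tmul_mul_tmul]
      have h := mul_antipode_rTensor_comul_apply (R := R) (a := rx.left i * ry.left j)
      rw [hcm] at h
      simp only [map_sum, LinearMap.rTensor_tmul, LinearMap.mul'_apply] at h
      rw [h, Bialgebra.counit_mul]
    calc ∑ j ∈ ry.index, ∑ i ∈ rx.index, ∑ p ∈ (rxl i).index, ∑ q ∈ (ryl j).index,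
          S ((rxl i).left p * (ryl j).left q) *
            (((rxl i).right p * (ryl j).right q) * (S (ry.right j) * S (rx.right i)))
        = ∑ j ∈ ry.index, ∑ i ∈ rx.index,
            algebraMap R C (counit (R := R) (rx.left i) * counit (R := R) (ry.left j)) *
              (S (ry.right j) * S (rx.right i)) := by
          refine Finset.sum_congr rfl fun j hj => Finset.sum_congr rfl fun i hi => ?_
          rw [← hinner j hj i hi, Finset.sum_mul]
          refine Finset.sum_congr rfl fun p _ => ?_
          rw [Finset.sum_mul]
          refine Finset.sum_congr rfl fun q _ => ?_
          simp only [mul_assoc]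
      _ = ∑ j ∈ ry.index, ∑ i ∈ rx.index,
            (counit (R := R) (ry.left j) • S (ry.right j)) *
              (counit (R := R) (rx.left i) • S (rx.right i)) := by
          refine Finset.sum_congr rfl fun j _ => Finset.sum_congr rfl fun i _ => ?_
          rw [map_mul, mul_assoc]
          simp only [← Algebra.smul_def, smul_mul_assoc, mul_smul_comm, smul_smul]
          rw [mul_comm]
      _ = S y * S x := by
          rw [← Finset.sum_mul_sum]
          simp only [← map_smul, ← map_sum]
          rw [zs_sum_counit_smul_right ry, zs_sum_counit_smul_right rx]
  -- Part 2 : S (x * y) = X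
  have stageA : ∀ (u' v' d : C),
      ∑ i ∈ rx.index, ∑ p ∈ (rxl i).index,
        S ((rxl i).left p * u') * (((rxl i).right p * v') * (S d * S (rx.right i)))
      = ∑ i ∈ rx.index, ∑ s ∈ (rxr i).index,
        S (rx.left i * u') * (((rxr i).left s * v') * (S d * S ((rxr i).right s))) := by
    intro u' v' d
    have h := congrArg (⇑((LinearMap.mul' R C) ∘ₗ TensorProduct.map (S ∘ₗ mulRight R u')
        ((LinearMap.mul' R C) ∘ₗ TensorProduct.map (mulRight R v') (mulLeft R (S d) ∘ₗ S))))
      (sum_tmul_tmul_eq rx rxl rxr)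
    simpa only [map_sum, coe_comp, Function.comp_apply, TensorProduct.map_tmul,
      LinearMap.mul'_apply, mulRight_apply, mulLeft_apply] using h
  have stageB : ∀ (a m w : C),
      ∑ j ∈ ry.index, ∑ q ∈ (ryl j).index,
        S (a * (ryl j).left q) * ((m * (ryl j).right q) * (S (ry.right j) * S w))
      = ∑ j ∈ ry.index, ∑ t ∈ (ryr j).index,
        S (a * ry.left j) * ((m * (ryr j).left t) * (S ((ryr j).right t) * S w)) := by
    intro a m w
    have h := congrArg (⇑((LinearMap.mul' R C) ∘ₗ TensorProduct.map (S ∘ₗ mulLeft R a)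
        ((LinearMap.mul' R C) ∘ₗ TensorProduct.map (mulLeft R m) (mulRight R (S w) ∘ₗ S))))
      (sum_tmul_tmul_eq ry ryl ryr)
    simpa only [map_sum, coe_comp, Function.comp_apply, TensorProduct.map_tmul,
      LinearMap.mul'_apply, mulRight_apply, mulLeft_apply] using h
  have part2 : S (x * y) = X := by
    calc S (x * y)
        = ∑ i ∈ rx.index, ∑ j ∈ ry.index,
            counit (R := R) (ry.right j) • counit (R := R) (rx.right i) •
              S (rx.left i * ry.left j) := by
          have hxy : x * y = ∑ i ∈ rx.index, ∑ j ∈ ry.index,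
              (counit (R := R) (rx.right i) • rx.left i) *
                (counit (R := R) (ry.right j) • ry.left j) := by
            conv_lhs => rw [← zs_sum_counit_smul_left rx, ← zs_sum_counit_smul_left ry,
              Finset.sum_mul_sum]
          rw [hxy, map_sum]
          refine Finset.sum_congr rfl fun i _ => ?_
          rw [map_sum]
          refine Finset.sum_congr rfl fun j _ => ?_
          rw [smul_mul_assoc, mul_smul_comm, map_smul, map_smul, smul_comm]
      _ = ∑ i ∈ rx.index, ∑ j ∈ ry.index, ∑ s ∈ (rxr i).index,
            counit (R := R) (ry.right j) •
              (S (rx.left i * ry.left j) * ((rxr i).left s * S ((rxr i).right s))) := by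
          refine Finset.sum_congr rfl fun i _ => Finset.sum_congr rfl fun j _ => ?_
          rw [← Finset.smul_sum, ← Finset.mul_sum, sum_mul_antipode_eq_algebraMap_counit (rxr i),
            ← Algebra.commutes, ← Algebra.smul_def]
      _ = ∑ i ∈ rx.index, ∑ j ∈ ry.index, ∑ s ∈ (rxr i).index, ∑ t ∈ (ryr j).index,
            S (rx.left i * ry.left j) *
              (((rxr i).left s * (ryr j).left t) *
                (S ((ryr j).right t) * S ((rxr i).right s))) := by
          refine Finset.sum_congr rfl fun i _ => Finset.sum_congr rfl fun j _ =>
            Finset.sum_congr rfl fun s _ => ?_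
          have hcol : ∑ t ∈ (ryr j).index,
              S (rx.left i * ry.left j) *
                (((rxr i).left s * (ryr j).left t) *
                  (S ((ryr j).right t) * S ((rxr i).right s)))
              = S (rx.left i * ry.left j) * ((rxr i).left s *
                  ((∑ t ∈ (ryr j).index, (ryr j).left t * S ((ryr j).right t)) *
                    S ((rxr i).right s))) := by
            rw [Finset.sum_mul, Finset.mul_sum, Finset.mul_sum]
            refine Finset.sum_congr rfl fun t _ => ?_
            simp only [mul_assoc]
          rw [hcol, sum_mul_antipode_eq_algebraMap_counit (ryr j)]
          simp only [← Algebra.smul_def, mul_smul_comm]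
      _ = ∑ i ∈ rx.index, ∑ s ∈ (rxr i).index, ∑ j ∈ ry.index, ∑ t ∈ (ryr j).index,
            S (rx.left i * ry.left j) *
              (((rxr i).left s * (ryr j).left t) *
                (S ((ryr j).right t) * S ((rxr i).right s))) := by
          refine Finset.sum_congr rfl fun i _ => Finset.sum_comm
      _ = ∑ i ∈ rx.index, ∑ s ∈ (rxr i).index, ∑ j ∈ ry.index, ∑ q ∈ (ryl j).index,
            S (rx.left i * (ryl j).left q) *
              (((rxr i).left s * (ryl j).right q) *
                (S (ry.right j) * S ((rxr i).right s))) := by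
          refine Finset.sum_congr rfl fun i _ => Finset.sum_congr rfl fun s _ => ?_
          exact (stageB _ _ _).symm
      _ = ∑ j ∈ ry.index, ∑ q ∈ (ryl j).index, ∑ i ∈ rx.index, ∑ p ∈ (rxl i).index,
            S ((rxl i).left p * (ryl j).left q) *
              (((rxl i).right p * (ryl j).right q) *
                (S (ry.right j) * S (rx.right i))) := by
          rw [zs_sum_sum_comm]
          refine Finset.sum_congr rfl fun j _ => Finset.sum_congr rfl fun q _ => ?_
          exact (stageA _ _ _).symm
      _ = X := hX.symm
  exact part2.trans part1
end ZHopfHelpers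


open TensorProduct

variable {k : Type} [Field k] {H A B : Type} [Ring H] [Ring A] [Ring B]
  [HopfAlgebra k H] [Algebra k A] [Algebra k B] {act : A →ₗ[k] H →ₗ[k] A}

section ZSmash
open TensorProduct Coalgebra HopfAlgebra LinearMap

variable {k : Type} [Field k] {H A B : Type} [Ring H] [Ring A] [Ring B]
  [HopfAlgebra k H] [Algebra k A] [Algebra k B] {act : A →ₗ[k] H →ₗ[k] A}

lemma zs_straighten (Sp : SmashProduct k H A B act) (a : A) {x : H} {ι : Type*} (r : Repr k x ι) :
    Sp.ιA a * Sp.ιH x = ∑ i ∈ r.index, Sp.ιH (r.left i) * Sp.ιA (act a (r.right i)) := by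
  have h := Sp.straighten a x
  rw [← r.eq] at h
  simpa only [map_sum, TensorProduct.map_tmul, LinearMap.mul'_apply, coe_comp,
    Function.comp_apply, AlgHom.toLinearMap_apply] using h

lemma zs_R2 (Sp : SmashProduct k H A B act) (φ : B →ₐ[k] A) (hφ : ∀ a : A, φ (Sp.ιA a) = a)
    (a : A) {x : H} {ι : Type*} (r : Repr k x ι) :
    a * φ (Sp.ιH x) = ∑ i ∈ r.index, φ (Sp.ιH (r.left i)) * act a (r.right i) := by
  have h2 := congrArg φ (zs_straighten Sp a r)
  simpa only [map_mul, map_sum, hφ] using h2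

/-- `act a x = ∑ η (S x₁) * (a * η x₂)`. -/
lemma zs_act_eq (Sp : SmashProduct k H A B act) (φ : B →ₐ[k] A)
    (hφ : ∀ a : A, φ (Sp.ιA a) = a) (a : A) {x : H} {ι : Type*} (r : Repr k x ι) :
    act a x = ∑ i ∈ r.index,
      φ (Sp.ιH (antipode (R := k) (r.left i))) * (a * φ (Sp.ιH (r.right i))) := by
  have rl : ∀ i, Repr k (r.left i) (H × H) := fun i => ℛ k _
  have rr : ∀ i, Repr k (r.right i) (H × H) := fun i => ℛ k _
  set ηl : H →ₗ[k] A := φ.toLinearMap ∘ₗ Sp.ιH.toLinearMap with hηl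
  have hη : ∀ z : H, φ (Sp.ιH z) = ηl z := fun z => rfl
  symm
  calc ∑ i ∈ r.index, φ (Sp.ιH (antipode (R := k) (r.left i))) * (a * φ (Sp.ιH (r.right i)))
      = ∑ i ∈ r.index, ∑ j ∈ (rr i).index,
          ηl (antipode (R := k) (r.left i)) *
            (ηl ((rr i).left j) * act a ((rr i).right j)) := by
        refine Finset.sum_congr rfl fun i _ => ?_
        rw [zs_R2 Sp φ hφ a (rr i), Finset.mul_sum]
        simp only [hη]
    _ = ∑ i ∈ r.index, ∑ p ∈ (rl i).index,
          ηl (antipode (R := k) ((rl i).left p)) *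
            (ηl ((rl i).right p) * act a (r.right i)) := by
        have h := congrArg (⇑((LinearMap.mul' k A) ∘ₗ TensorProduct.map
            (ηl ∘ₗ antipode (R := k)) ((LinearMap.mul' k A) ∘ₗ TensorProduct.map ηl (act a))))
          (sum_tmul_tmul_eq r rl rr)
        simpa only [map_sum, coe_comp, Function.comp_apply, TensorProduct.map_tmul,
          LinearMap.mul'_apply] using h.symm
    _ = ∑ i ∈ r.index, counit (R := k) (r.left i) • act a (r.right i) := by
        refine Finset.sum_congr rfl fun i _ => ?_
        have hcol : ∑ p ∈ (rl i).index,
            ηl (antipode (R := k) ((rl i).left p)) *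
              (ηl ((rl i).right p) * act a (r.right i))
            = (∑ p ∈ (rl i).index,
                ηl (antipode (R := k) ((rl i).left p)) * ηl ((rl i).right p)) *
                act a (r.right i) := by
          rw [Finset.sum_mul]
          exact Finset.sum_congr rfl fun p _ => by rw [mul_assoc]
        rw [hcol]
        have : ∑ p ∈ (rl i).index,
            ηl (antipode (R := k) ((rl i).left p)) * ηl ((rl i).right p)
            = algebraMap k A (counit (R := k) (r.left i)) := by
          have hm : ∀ p, ηl (antipode (R := k) ((rl i).left p)) * ηl ((rl i).right p)
              = ηl (antipode (R := k) ((rl i).left p) * (rl i).right p) := fun p => by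
            simp only [hηl, coe_comp, Function.comp_apply, AlgHom.toLinearMap_apply, ← map_mul]
          simp only [hm]
          rw [← map_sum, sum_antipode_mul_eq_algebraMap_counit (rl i)]
          simp only [hηl, coe_comp, Function.comp_apply, AlgHom.toLinearMap_apply,
            AlgHom.commutes]
        rw [this, ← Algebra.smul_def]
    _ = act a x := by
        simp only [← map_smul]
        rw [← map_sum, zs_sum_counit_smul_right r]

lemma zs_T_sum (T : H →ₗ[k] H) (hTmul : ∀ u v : H, T (u * v) = T v * T u)
    (hTS : ∀ z : H, T (antipode (R := k) z) = z) (hT1 : T 1 = 1) {x : H} {ι : Type*} (r : Repr k x ι) :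
    ∑ i ∈ r.index, T (r.right i) * r.left i = algebraMap k H (counit (R := k) x) := by
  have h := congrArg T (sum_antipode_mul_eq_algebraMap_counit (R := k) r)
  rw [map_sum] at h
  have he : ∀ i, T (antipode (R := k) (r.left i) * r.right i) = T (r.right i) * r.left i :=
    fun i => by rw [hTmul, hTS]
  simp only [he] at h
  rw [h, Algebra.algebraMap_eq_smul_one, map_smul, hT1, ← Algebra.algebraMap_eq_smul_one]

lemma zs_claim4 (Sp : SmashProduct k H A B act) (φ : B →ₐ[k] A)
    (hφ : ∀ a : A, φ (Sp.ιA a) = a) (T : H →ₗ[k] H)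
    (hTmul : ∀ u v : H, T (u * v) = T v * T u)
    (hTS : ∀ z : H, T (antipode (R := k) z) = z) (hT1 : T 1 = 1) {y : H} {ι : Type*} (r : Repr k y ι) :
    ∑ s ∈ r.index, act (φ (Sp.ιH (T (r.right s)))) (r.left s)
      = φ (Sp.ιH (antipode (R := k) y)) := by
  have rl : ∀ s, Repr k (r.left s) (H × H) := fun s => ℛ k _
  have rr : ∀ s, Repr k (r.right s) (H × H) := fun s => ℛ k _
  set ηl : H →ₗ[k] A := φ.toLinearMap ∘ₗ Sp.ιH.toLinearMap with hηl
  have hη : ∀ z : H, φ (Sp.ιH z) = ηl z := fun z => rfl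
  calc ∑ s ∈ r.index, act (φ (Sp.ιH (T (r.right s)))) (r.left s)
      = ∑ s ∈ r.index, ∑ f ∈ (rl s).index,
          ηl (antipode (R := k) ((rl s).left f)) *
            (ηl (T (r.right s)) * ηl ((rl s).right f)) := by
        refine Finset.sum_congr rfl fun s _ => ?_
        rw [zs_act_eq Sp φ hφ _ (rl s)]
        simp only [hη]
    _ = ∑ s ∈ r.index, ∑ t ∈ (rr s).index,
          ηl (antipode (R := k) (r.left s)) *
            (ηl (T ((rr s).right t)) * ηl ((rr s).left t)) := by
        have h := congrArg (⇑((LinearMap.mul' k A) ∘ₗ TensorProduct.map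
            (ηl ∘ₗ antipode (R := k))
            (TensorProduct.lift ((((LinearMap.mul k A) ∘ₗ (ηl ∘ₗ T)).compl₂ ηl).flip))))
          (sum_tmul_tmul_eq r rl rr)
        simpa only [map_sum, coe_comp, Function.comp_apply, TensorProduct.map_tmul,
          LinearMap.mul'_apply, TensorProduct.lift.tmul, flip_apply, compl₂_apply,
          mul_apply'] using h
    _ = ∑ s ∈ r.index, counit (R := k) (r.right s) • ηl (antipode (R := k) (r.left s)) := by
        refine Finset.sum_congr rfl fun s _ => ?_
        rw [← Finset.mul_sum]
        have hm : ∀ t, ηl (T ((rr s).right t)) * ηl ((rr s).left t)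
            = ηl (T ((rr s).right t) * (rr s).left t) := fun t => by
          simp only [hηl, coe_comp, Function.comp_apply, AlgHom.toLinearMap_apply, ← map_mul]
        simp only [hm]
        rw [← map_sum, zs_T_sum T hTmul hTS hT1 (rr s)]
        have : ηl (algebraMap k H (counit (R := k) (r.right s)))
            = algebraMap k A (counit (R := k) (r.right s)) := by
          simp only [hηl, coe_comp, Function.comp_apply, AlgHom.toLinearMap_apply,
            AlgHom.commutes]
        rw [this, ← Algebra.commutes, ← Algebra.smul_def]
    _ = φ (Sp.ιH (antipode (R := k) y)) := by
        simp only [← map_smul]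
        rw [← map_sum, ← map_sum, zs_sum_counit_smul_left r, hη]

lemma zs_main (Sp : SmashProduct k H A B act) (φ : B →ₐ[k] A)
    (hφ : ∀ a : A, φ (Sp.ιA a) = a) (T : H →ₗ[k] H)
    (hTmul : ∀ u v : H, T (u * v) = T v * T u)
    (hTS : ∀ z : H, T (antipode (R := k) z) = z) (hT1 : T 1 = 1) {x : H} {ι : Type*} (r : Repr k x ι) :
    ∑ i ∈ r.index, Sp.ιA (φ (Sp.ιH (T (r.right i)))) * Sp.ιH (r.left i)
      = ∑ i ∈ r.index, Sp.ιH (r.left i) * Sp.ιA (φ (Sp.ιH (antipode (R := k) (r.right i)))) := by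
  have rl : ∀ i, Repr k (r.left i) (H × H) := fun i => ℛ k _
  have rr : ∀ i, Repr k (r.right i) (H × H) := fun i => ℛ k _
  set ηl : H →ₗ[k] A := φ.toLinearMap ∘ₗ Sp.ιH.toLinearMap with hηl
  have hη : ∀ z : H, φ (Sp.ιH z) = ηl z := fun z => rfl
  calc ∑ i ∈ r.index, Sp.ιA (φ (Sp.ιH (T (r.right i)))) * Sp.ιH (r.left i)
      = ∑ i ∈ r.index, ∑ p ∈ (rl i).index,
          Sp.ιH ((rl i).left p) * Sp.ιA (act (ηl (T (r.right i))) ((rl i).right p)) := by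
        refine Finset.sum_congr rfl fun i _ => ?_
        rw [hη, zs_straighten Sp _ (rl i)]
    _ = ∑ i ∈ r.index, ∑ t ∈ (rr i).index,
          Sp.ιH (r.left i) * Sp.ιA (act (ηl (T ((rr i).right t))) ((rr i).left t)) := by
        have h := congrArg (⇑((LinearMap.mul' k B) ∘ₗ TensorProduct.map
            Sp.ιH.toLinearMap (Sp.ιA.toLinearMap ∘ₗ
              TensorProduct.lift ((act ∘ₗ (ηl ∘ₗ T)).flip))))
          (sum_tmul_tmul_eq r rl rr)
        simpa only [map_sum, coe_comp, Function.comp_apply, TensorProduct.map_tmul,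
          LinearMap.mul'_apply, TensorProduct.lift.tmul, flip_apply,
          AlgHom.toLinearMap_apply] using h
    _ = ∑ i ∈ r.index, Sp.ιH (r.left i) *
          Sp.ιA (φ (Sp.ιH (antipode (R := k) (r.right i)))) := by
        refine Finset.sum_congr rfl fun i _ => ?_
        rw [← Finset.mul_sum, ← map_sum]
        congr 1
        rw [← zs_claim4 Sp φ hφ T hTmul hTS hT1 (rr i)]
        exact congrArg _ (Finset.sum_congr rfl fun t _ => by rw [hη])

end ZSmash


/-- in the Hopf `*`-algebra setting, if `φ̃ : A >⋊ H → A` is a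
`*`-homomorphism then so is `ζ̃`, i.e. `ζ̃(g*) = ζ̃(g)*` for all `g ∈ H`. -/
theorem zeta_star
    [StarRing k] [StarRing H] [StarRing A] [StarRing B]
    (hMA : RightModuleAlgebra k H A act)
    (S : SmashProduct k H A B act)
    (hstarH : ∀ g : H, star (S.ιH g) = S.ιH (star g))
    (hstarA : ∀ a : A, star (S.ιA a) = S.ιA (star a))
    (hcomul_star : ∀ g : H, ∃ (n : ℕ) (g1 g2 : Fin n → H),
      Coalgebra.comul (R := k) g = ∑ i, g1 i ⊗ₜ[k] g2 i ∧
      Coalgebra.comul (R := k) (star g) = ∑ i, star (g1 i) ⊗ₜ[k] star (g2 i))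
    (hantipode_star : ∀ g : H,
      HopfAlgebra.antipode (R := k) (star (HopfAlgebra.antipode (R := k) (star g))) = g)
    (φ : B →ₐ[k] A) (hφ : ∀ a : A, φ (S.ιA a) = a)
    (hφstar : ∀ b : B, φ (star b) = star (φ b)) :
    ∀ g : H, zeta S φ (star g) = star (zeta S φ g) := by
  intro g
  classical
  obtain ⟨n, g1, g2, h1, h2⟩ := hcomul_star g
  have hσS : ∀ z : H, star (HopfAlgebra.antipode (R := k)
      (star (HopfAlgebra.antipode (R := k) z))) = z := by
    intro z
    have h := hantipode_star (star z)
    rw [star_star] at h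
    calc star (HopfAlgebra.antipode (R := k) (star (HopfAlgebra.antipode (R := k) z)))
        = star (star z) := by rw [h]
      _ = z := star_star z
  have hinj : Function.Injective (HopfAlgebra.antipode (R := k) (A := H)) := by
    intro u v huv
    have hu := hσS u
    rw [huv] at hu
    exact hu.symm.trans (hσS v)
  have hsurj : Function.Surjective (HopfAlgebra.antipode (R := k) (A := H)) := fun z =>
    ⟨star (HopfAlgebra.antipode (R := k) (star z)), hantipode_star z⟩
  let E : H ≃ₗ[k] H :=
    LinearEquiv.ofBijective (HopfAlgebra.antipode (R := k) (A := H)) ⟨hinj, hsurj⟩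
  let T : H →ₗ[k] H := (E.symm : H →ₗ[k] H)
  have hST : ∀ z : H, HopfAlgebra.antipode (R := k) (T z) = z := fun z =>
    E.apply_symm_apply z
  have hTS : ∀ z : H, T (HopfAlgebra.antipode (R := k) z) = z := fun z =>
    E.symm_apply_apply z
  have hTmul : ∀ u v : H, T (u * v) = T v * T u := by
    intro u v
    apply hinj
    rw [hST, zs_antipode_mul, hST, hST]
  have hT1 : T (1 : H) = 1 := by
    apply hinj
    rw [hST, zs_antipode_one]
  have hTstar : ∀ z : H, star (HopfAlgebra.antipode (R := k) z) = T (star z) := by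
    intro z
    apply hinj
    rw [hST]
    have h := congrArg star (hσS z)
    rwa [star_star] at h
  have hz : zeta S φ g = ∑ i, S.ιH (g1 i) *
      S.ιA (φ (S.ιH (HopfAlgebra.antipode (R := k) (g2 i)))) := by
    simp only [zeta, LinearMap.coe_comp, Function.comp_apply]
    rw [h1]
    simp only [map_sum, TensorProduct.map_tmul, LinearMap.mul'_apply, LinearMap.coe_comp,
      Function.comp_apply, AlgHom.toLinearMap_apply]
  have hzs : zeta S φ (star g) = ∑ i, S.ιH (star (g1 i)) *
      S.ιA (φ (S.ιH (HopfAlgebra.antipode (R := k) (star (g2 i))))) := by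
    simp only [zeta, LinearMap.coe_comp, Function.comp_apply]
    rw [h2]
    simp only [map_sum, TensorProduct.map_tmul, LinearMap.mul'_apply, LinearMap.coe_comp,
      Function.comp_apply, AlgHom.toLinearMap_apply]
  have hstarz : star (zeta S φ g) = ∑ i, S.ιA (φ (S.ιH (T (star (g2 i))))) *
      S.ιH (star (g1 i)) := by
    rw [hz, star_sum]
    refine Finset.sum_congr rfl fun i _ => ?_
    rw [star_mul, hstarA, hstarH, ← hφstar, hstarH, hTstar]
  have hmain := zs_main S φ hφ T hTmul hTS hT1
    (r := ⟨(Finset.univ : Finset (Fin n)), fun i => star (g1 i), fun i => star (g2 i), h2.symm⟩)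
  rw [hzs, hstarz]
  exact hmain.symm
end

section
/- Let ζ̃ : H → A >⋊ H be the decoupling map ζ̃(g) = g₍₁₎ φ̃(S g₍₂₎) associated to an algebra map φ̃ : A >⋊ H → A fixing A. Then the linear map Θ : H ⊗ A → A >⋊ H defined by Θ(g ⊗ a) = ζ̃(g) a is bijective, with inverse determined by g a ↦ g₍₁₎ ⊗ φ̃(g₍₂₎) a. -/
open TensorProduct

variable {k : Type} [Field k] {H A B : Type} [Ring H] [Ring A] [Ring B]
  [HopfAlgebra k H] [Algebra k A] [Algebra k B] {act : A →ₗ[k] H →ₗ[k] A}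

open Coalgebra in
/-- auxiliary twisting map `g ⊗ a ↦ ∑ g₁ ⊗ h(g₂) a`. -/
noncomputable def Tl (h : H →ₗ[k] A) : H ⊗[k] A →ₗ[k] H ⊗[k] A :=
  (LinearMap.lTensor H (LinearMap.mul' k A)) ∘ₗ (TensorProduct.assoc k H A A).toLinearMap ∘ₗ
    LinearMap.rTensor A ((LinearMap.lTensor H h) ∘ₗ Coalgebra.comul)

open Coalgebra in
lemma Tl_tmul (h : H →ₗ[k] A) (g : H) (a : A) {ι : Type} (r : Coalgebra.Repr k g ι) :
    Tl h (g ⊗ₜ a) = ∑ i ∈ r.index, r.left i ⊗ₜ[k] (h (r.right i) * a) := by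
  simp only [Tl, LinearMap.comp_apply, LinearMap.rTensor_tmul]
  rw [← r.eq]
  simp [map_sum, TensorProduct.sum_tmul]

open Coalgebra in
lemma Tl_comp (h h' : H →ₗ[k] A) :
    (Tl h) ∘ₗ (Tl h') =
      Tl ((LinearMap.mul' k A) ∘ₗ (TensorProduct.map h h') ∘ₗ Coalgebra.comul) := by
  apply TensorProduct.ext'
  intro g a
  set r := ℛ k g with hr
  set r₁ : (i : r.ι) → Repr k (r.left i) (H × H) := fun i => ℛ k (r.left i) with hr1
  set r₂ : (i : r.ι) → Repr k (r.right i) (H × H) := fun i => ℛ k (r.right i) with hr2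
  have key := sum_tmul_tmul_eq r r₁ r₂
  have key2 := congrArg (LinearMap.lTensor H ((LinearMap.mulRight k a) ∘ₗ
      (LinearMap.mul' k A) ∘ₗ (TensorProduct.map h h'))) key
  simp only [map_sum, LinearMap.lTensor_tmul, LinearMap.comp_apply,
    TensorProduct.map_tmul, LinearMap.mul'_apply, LinearMap.mulRight_apply] at key2
  calc Tl h (Tl h' (g ⊗ₜ a))
      = ∑ i ∈ r.index, ∑ j ∈ (r₁ i).index,
          (r₁ i).left j ⊗ₜ[k] (h ((r₁ i).right j) * (h' (r.right i) * a)) := by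
        rw [Tl_tmul h' g a r, map_sum]
        refine Finset.sum_congr rfl fun i _ => ?_
        rw [Tl_tmul h _ _ (r₁ i)]
    _ = ∑ i ∈ r.index, ∑ j ∈ (r₂ i).index,
          r.left i ⊗ₜ[k] (h ((r₂ i).left j) * h' ((r₂ i).right j) * a) := by
        simpa [mul_assoc] using key2
    _ = Tl ((LinearMap.mul' k A) ∘ₗ (TensorProduct.map h h') ∘ₗ Coalgebra.comul) (g ⊗ₜ a) := by
        rw [Tl_tmul _ g a r]
        refine (Finset.sum_congr rfl fun i _ => ?_).symm
        rw [LinearMap.comp_apply, LinearMap.comp_apply, ← (r₂ i).eq]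
        simp [map_sum, Finset.sum_mul, TensorProduct.tmul_sum]

open Coalgebra in
lemma Tl_counit :
    Tl (H := H) (A := A) ((Algebra.linearMap k A) ∘ₗ Coalgebra.counit) = LinearMap.id := by
  apply TensorProduct.ext'
  intro g a
  set r := ℛ k g
  rw [Tl_tmul _ g a r]
  have := sum_tmul_counit_eq r
  have key := congrArg (LinearMap.lTensor H (LinearMap.toSpanSingleton k A a)) this
  simp only [map_sum, LinearMap.lTensor_tmul, LinearMap.toSpanSingleton_apply, one_smul] at key
  simpa [Algebra.smul_def, Algebra.linearMap_apply, mul_assoc, Algebra.smul_mul_assoc] using key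

open Coalgebra in
lemma conv_antipode_left_s19 (ψ : H →ₐ[k] A) :
    (LinearMap.mul' k A) ∘ₗ
      (TensorProduct.map (ψ.toLinearMap ∘ₗ HopfAlgebra.antipode (R := k)) ψ.toLinearMap) ∘ₗ
      Coalgebra.comul = (Algebra.linearMap k A) ∘ₗ Coalgebra.counit := by
  ext g
  set r := ℛ k g
  have h2 := congrArg ψ (HopfAlgebra.sum_antipode_mul_eq_algebraMap_counit r)
  simp only [map_sum, map_mul] at h2
  rw [LinearMap.comp_apply, LinearMap.comp_apply, ← r.eq]
  simpa [map_sum] using h2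

open Coalgebra in
lemma conv_antipode_right_s19 (ψ : H →ₐ[k] A) :
    (LinearMap.mul' k A) ∘ₗ
      (TensorProduct.map ψ.toLinearMap (ψ.toLinearMap ∘ₗ HopfAlgebra.antipode (R := k))) ∘ₗ
      Coalgebra.comul = (Algebra.linearMap k A) ∘ₗ Coalgebra.counit := by
  ext g
  set r := ℛ k g
  have h2 := congrArg ψ (HopfAlgebra.sum_mul_antipode_eq_algebraMap_counit r)
  simp only [map_sum, map_mul] at h2
  rw [LinearMap.comp_apply, LinearMap.comp_apply, ← r.eq]
  simpa [map_sum] using h2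

open Coalgebra in
lemma theta_eq (S : SmashProduct k H A B act) (φ : B →ₐ[k] A) (x : H ⊗[k] A) :
    LinearMap.mul' k B (TensorProduct.map (zeta S φ) S.ιA.toLinearMap x) =
    LinearMap.mul' k B (TensorProduct.map S.ιH.toLinearMap S.ιA.toLinearMap
      (Tl (((φ.comp S.ιH).toLinearMap) ∘ₗ HopfAlgebra.antipode (R := k)) x)) := by
  have : ((LinearMap.mul' k B) ∘ₗ TensorProduct.map (zeta S φ) S.ιA.toLinearMap) =
      ((LinearMap.mul' k B) ∘ₗ TensorProduct.map S.ιH.toLinearMap S.ιA.toLinearMap) ∘ₗ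
        Tl (((φ.comp S.ιH).toLinearMap) ∘ₗ HopfAlgebra.antipode (R := k)) := by
    apply TensorProduct.ext'
    intro g a
    set r := ℛ k g
    simp only [LinearMap.comp_apply, TensorProduct.map_tmul, LinearMap.mul'_apply]
    rw [Tl_tmul _ g a r]
    have hz : zeta S φ g = ∑ i ∈ r.index,
        S.ιH (r.left i) * S.ιA (φ (S.ιH (HopfAlgebra.antipode (R := k) (r.right i)))) := by
      simp only [zeta, LinearMap.comp_apply, ← r.eq]
      simp [map_sum]
    rw [hz, map_sum, map_sum, Finset.sum_mul]
    refine Finset.sum_congr rfl fun i _ => ?_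
    simp [mul_assoc]
  exact LinearMap.congr_fun this x


/-- `Θ : H ⊗ A → A >⋊ H`, `g ⊗ a ↦ ζ̃(g) a`, is bijective, with inverse
determined by `g a ↦ g₍₁₎ ⊗ φ̃(g₍₂₎) a`. -/
theorem theta_bijective
    (hMA : RightModuleAlgebra k H A act)
    (S : SmashProduct k H A B act) (φ : B →ₐ[k] A)
    (hφ : ∀ a : A, φ (S.ιA a) = a) :
    Function.Bijective (fun x : H ⊗[k] A =>
      LinearMap.mul' k B (TensorProduct.map (zeta S φ) S.ιA.toLinearMap x)) ∧
    ∀ (g : H) (a : A),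
      LinearMap.mul' k B (TensorProduct.map (zeta S φ) S.ιA.toLinearMap
        (TensorProduct.map LinearMap.id
          ((LinearMap.mulRight k a) ∘ₗ φ.toLinearMap ∘ₗ S.ιH.toLinearMap)
          (Coalgebra.comul g))) = S.ιH g * S.ιA a := by
  set ψ : H →ₐ[k] A := φ.comp S.ιH with hψ
  set f : H →ₗ[k] A := ψ.toLinearMap ∘ₗ HopfAlgebra.antipode (R := k) with hf
  set f' : H →ₗ[k] A := ψ.toLinearMap with hf'
  have hff' : (Tl f) ∘ₗ (Tl f') = LinearMap.id := by
    rw [Tl_comp, conv_antipode_left_s19 ψ, Tl_counit]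
  have hf'f : (Tl f') ∘ₗ (Tl f) = LinearMap.id := by
    rw [Tl_comp, conv_antipode_right_s19 ψ, Tl_counit]
  have hTlBij : Function.Bijective (Tl f) :=
    Function.bijective_iff_has_inverse.mpr ⟨Tl f',
      fun x => LinearMap.congr_fun hf'f x, fun x => LinearMap.congr_fun hff' x⟩
  constructor
  · have : (fun x : H ⊗[k] A =>
        LinearMap.mul' k B (TensorProduct.map (zeta S φ) S.ιA.toLinearMap x)) =
        (fun y : H ⊗[k] A =>
          LinearMap.mul' k B (TensorProduct.map S.ιH.toLinearMap S.ιA.toLinearMap y)) ∘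
        (Tl f) := funext fun x => theta_eq S φ x
    rw [this]
    exact S.mulMap_bij.comp hTlBij
  · intro g a
    have hTl' : TensorProduct.map LinearMap.id
        ((LinearMap.mulRight k a) ∘ₗ φ.toLinearMap ∘ₗ S.ιH.toLinearMap)
        (Coalgebra.comul g) = Tl f' (g ⊗ₜ a) := by
      set r := Coalgebra.Repr.arbitrary k g
      rw [Tl_tmul _ g a r, ← r.eq]
      simp [map_sum, hf', hψ]
    rw [hTl', theta_eq S φ, ← LinearMap.comp_apply (Tl f) (Tl f'), hff']
    simp
end
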